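/- arXiv:2205.10261 — 3 statements merged into one kernel-verified Lean document; each statement's English description precedes it below -/
import Mathlib

section
/- Suppose K̃ : ℝ × ℝ^d → ℂ satisfies the Penrose-type lower bound |1 - K̃(τ,ξ)| ≥ c̊ > 0 everywhere, and for each 1 ≤ i ≤ j the derivative bounds |∇_ξ^i K̃(τ,ξ)| ≤ M ( ⟨ξ⟩^{-i}(|τ|+|ξ|)^{-2} + ⟨ξ⟩^{-2}(|τ|+|ξ|)^{-i} ) (with the improved bound |∇_ξ K̃| ≤ M |ξ| ⟨ξ⟩^{-2}(|τ|+|ξ|)^{-2} for i=1). Then the function G̃ := K̃/(1-K̃) = 1/(1-K̃) - 1 satisfies |∇_ξ^j G̃(τ,ξ)| ≤ C(c̊,j,d) M (1+M)^{j-1} ( ⟨ξ⟩^{-j}(|τ|+|ξ|)^{-2} + ⟨ξ⟩^{-2}(|τ|+|ξ|)^{-j} ) for every j ≥ 1. -/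
open MeasureTheory

/-- iterated ℂ-derivative formula for `z ↦ z/(1-z)` away from `1`. -/
lemma gderiv_formula (n : ℕ) :
    ∀ z : ℂ, z ≠ 1 →
      iteratedDeriv (n+1) (fun w : ℂ => w / (1 - w)) z
        = (Nat.factorial (n+1)) * ((1 - z)⁻¹) ^ (n+2) := by
  induction n with
  | zero =>
    intro z hz
    have h1 : (1:ℂ) - z ≠ 0 := sub_ne_zero.2 (Ne.symm hz)
    have hd : HasDerivAt (fun w : ℂ => w / (1 - w))
        (1 * (1-z)⁻¹ + z * (-(-1) / (1-z)^2)) z := by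
      have hinv : HasDerivAt (fun w : ℂ => (1 - w)⁻¹) (-(-1) / (1-z)^2) z :=
        ((hasDerivAt_id z).const_sub 1).inv h1
      simpa [div_eq_mul_inv, Pi.mul_def] using (hasDerivAt_id' z).mul hinv
    rw [iteratedDeriv_one, hd.deriv]
    simp only [inv_pow]
    field_simp
    ring
  | succ n ih =>
    intro z hz
    have h1 : (1:ℂ) - z ≠ 0 := sub_ne_zero.2 (Ne.symm hz)
    have hopen : IsOpen {w : ℂ | w ≠ 1} := isOpen_ne
    have hev : iteratedDeriv (n+1) (fun w : ℂ => w / (1 - w))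
        =ᶠ[nhds z] fun w => (Nat.factorial (n+1)) * ((1 - w)⁻¹) ^ (n+2) :=
      Filter.eventuallyEq_of_mem (hopen.mem_nhds hz) (fun w hw => ih w hw)
    rw [iteratedDeriv_succ, hev.deriv_eq]
    have hinv : HasDerivAt (fun w : ℂ => (1 - w)⁻¹) (-(-1) / (1-z)^2) z :=
      ((hasDerivAt_id z).const_sub 1).inv h1
    have hd : HasDerivAt (fun w : ℂ => ((Nat.factorial (n+1)) : ℂ) * ((1 - w)⁻¹) ^ (n+2))
        (((Nat.factorial (n+1)) : ℂ) * (((n+2 : ℕ) : ℂ) * ((1-z)⁻¹)^(n+2-1) * (-(-1) / (1-z)^2))) z :=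
      (hinv.pow (n+2)).const_mul _
    rw [hd.deriv]
    have : ((Nat.factorial (n+2)) : ℂ) = ((Nat.factorial (n+1)) : ℂ) * (n+2) := by
      push_cast [Nat.factorial_succ (n+1)]
      ring
    rw [this]
    rw [show n+2-1 = n+1 by omega]
    simp only [inv_pow]
    field_simp
    push_cast
    ring

lemma gbound (j : ℕ) (c : ℝ) (hc : 0 < c) (w : ℂ) (hw : c ≤ ‖1 - w‖) (i : ℕ) (hij : i ≤ j) :
    ‖iteratedFDerivWithin ℝ i (fun z : ℂ => z / (1 - z)) {z : ℂ | z ≠ 1} w‖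
      ≤ (Nat.factorial j) * (1 + 1/c) ^ (j+1) + (1 + 1/c) := by
  have h1 : (1:ℂ) - w ≠ 0 := by
    intro h; rw [h] at hw; simp at hw; linarith
  have hwt : w ∈ {z : ℂ | z ≠ 1} := by
    simp only [Set.mem_setOf_eq]
    intro h; apply h1; rw [h]; ring
  have hopen : IsOpen {z : ℂ | z ≠ 1} := isOpen_ne
  have hgC : ContDiffOn ℂ (j : ℕ∞) (fun z : ℂ => z / (1 - z)) {z : ℂ | z ≠ 1} :=
    ContDiffOn.div contDiffOn_id (contDiffOn_const.sub contDiffOn_id)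
      (fun z hz => sub_ne_zero.2 (Ne.symm hz))
  have hp : HasFTaylorSeriesUpToOn (j : ℕ∞) (fun z : ℂ => z / (1 - z))
      (ftaylorSeriesWithin ℂ (fun z : ℂ => z / (1 - z)) {z : ℂ | z ≠ 1}) {z : ℂ | z ≠ 1} :=
    hgC.ftaylorSeriesWithin hopen.uniqueDiffOn
  have hpR := hp.restrictScalars ℝ
  have heq : iteratedFDerivWithin ℝ i (fun z : ℂ => z / (1 - z)) {z : ℂ | z ≠ 1} w
      = ((ftaylorSeriesWithin ℂ (fun z : ℂ => z / (1 - z)) {z : ℂ | z ≠ 1} w) i).restrictScalars ℝ :=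
    (hpR.eq_iteratedFDerivWithin_of_uniqueDiffOn (by exact_mod_cast hij) hopen.uniqueDiffOn hwt).symm
  rw [heq, ContinuousMultilinearMap.norm_restrictScalars]
  have heq2 : (ftaylorSeriesWithin ℂ (fun z : ℂ => z / (1 - z)) {z : ℂ | z ≠ 1} w) i
      = iteratedFDerivWithin ℂ i (fun z : ℂ => z / (1 - z)) {z : ℂ | z ≠ 1} w := rfl
  rw [heq2, iteratedFDerivWithin_of_isOpen i hopen hwt,
    norm_iteratedFDeriv_eq_norm_iteratedDeriv]
  have hcinv : 1/‖1 - w‖ ≤ 1/c := by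
    apply one_div_le_one_div_of_le hc hw
  have h1c : (0:ℝ) ≤ 1 + 1/c := by positivity
  match i with
  | 0 =>
    rw [iteratedDeriv_zero]
    have : ‖w / (1 - w)‖ = ‖w‖/‖1-w‖ := by rw [norm_div]
    have hkey : w / (1 - w) = (1-w)⁻¹ - 1 := by field_simp; ring
    rw [hkey]
    have : ‖(1-w)⁻¹ - 1‖ ≤ ‖(1-w)⁻¹‖ + ‖(1:ℂ)‖ := norm_sub_le _ _
    have h2 : ‖(1-w)⁻¹‖ = 1/‖1-w‖ := by rw [norm_inv, one_div]
    have h3 : ‖(1-w)⁻¹ - 1‖ ≤ 1 + 1/c := by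
      calc ‖(1-w)⁻¹ - 1‖ ≤ ‖(1-w)⁻¹‖ + ‖(1:ℂ)‖ := norm_sub_le _ _
        _ = 1/‖1-w‖ + 1 := by rw [h2, norm_one]
        _ ≤ 1/c + 1 := by linarith
        _ = 1 + 1/c := by ring
    calc ‖(1-w)⁻¹ - 1‖ ≤ 1 + 1/c := h3
      _ ≤ (Nat.factorial j) * (1 + 1/c) ^ (j+1) + (1 + 1/c) := by
          nlinarith [pow_pos (by positivity : (0:ℝ) < 1 + 1/c) (j+1),
            (by positivity : (0:ℝ) < (Nat.factorial j : ℝ))]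
  | (n+1) =>
    rw [gderiv_formula n w hwt]
    have hnorm : ‖((Nat.factorial (n+1)) : ℂ) * ((1 - w)⁻¹) ^ (n+2)‖
        = (Nat.factorial (n+1)) * (1/‖1-w‖) ^ (n+2) := by
      rw [norm_mul, norm_pow, norm_inv]
      simp [one_div]
    rw [hnorm]
    have hfac : ((Nat.factorial (n+1)) : ℝ) ≤ (Nat.factorial j) :=
      Nat.cast_le.2 (Nat.factorial_le hij)
    have hb : (1/‖1-w‖) ^ (n+2) ≤ (1 + 1/c) ^ (j+1) := by
      have e1 : (1/‖1-w‖) ^ (n+2) ≤ (1+1/c) ^ (n+2) :=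
        pow_le_pow_left₀ (by positivity) (by linarith) _
      have e2 : (1+1/c) ^ (n+2) ≤ (1+1/c) ^ (j+1) :=
        pow_le_pow_right₀ (by have := one_div_pos.mpr hc; linarith) (by omega)
      linarith
    calc (Nat.factorial (n+1) : ℝ) * (1/‖1-w‖) ^ (n+2)
        ≤ (Nat.factorial j) * (1 + 1/c) ^ (j+1) := by
          apply mul_le_mul hfac hb (by positivity) (by positivity)
      _ ≤ (Nat.factorial j) * (1 + 1/c) ^ (j+1) + (1 + 1/c) := by linarith


lemma inv_pow_eq_rpow (x : ℝ) (hx : 0 ≤ x) (n : ℕ) : (x ^ n)⁻¹ = x ^ (-(n:ℝ)) := by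
  rw [← Real.rpow_natCast x n, ← Real.rpow_neg hx]


lemma rpow_prod_eq (A s : ℝ) (hA0 : 0 < A) (hs : 0 ≤ s) (p q r : ℝ) :
    (A ^ p * s ^ q) ^ r = A ^ (p*r) * s ^ (q*r) := by
  rw [Real.mul_rpow (by positivity) (by positivity), ← Real.rpow_mul hA0.le,
    ← Real.rpow_mul hs]

lemma key2 (j i : ℕ) (h2i : 2 ≤ i) (hij : i ≤ j) (A s : ℝ) (hA : 1 ≤ A) (hs : 0 ≤ s) :
    (A^i * s^2)⁻¹ + (A^2 * s^i)⁻¹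
      ≤ 2 * ((A^j * s^2)⁻¹ + (A^2 * s^j)⁻¹) ^ ((i:ℝ)/(j:ℝ)) := by
  have hA0 : (0:ℝ) < A := lt_of_lt_of_le one_pos hA
  have hj2 : 2 ≤ j := le_trans h2i hij
  have hjR : (0:ℝ) < (j:ℝ) := by exact_mod_cast (by omega : 0 < j)
  have hiR : (2:ℝ) ≤ (i:ℝ) := by exact_mod_cast h2i
  have hr0 : (0:ℝ) ≤ (i:ℝ)/(j:ℝ) := by positivity
  have hr1 : (i:ℝ)/(j:ℝ) ≤ 1 := by
    rw [div_le_one hjR]; exact_mod_cast hij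
  rcases eq_or_lt_of_le hs with h0 | hs0
  · rw [← h0]
    have hi0 : i ≠ 0 := by omega
    have hj0 : j ≠ 0 := by omega
    simp [zero_pow hi0, zero_pow hj0]
    positivity
  · set b := (A^j * s^2)⁻¹ + (A^2 * s^j)⁻¹ with hbdef
    have hb0 : 0 ≤ b := by positivity
    have e : ∀ n m : ℕ, (A^n * s^m)⁻¹ = A ^ (-(n:ℝ)) * s ^ (-(m:ℝ)) := by
      intro n m
      rw [mul_inv, inv_pow_eq_rpow A hA0.le, inv_pow_eq_rpow s hs]
    have hb' : b = A ^ (-(j:ℝ)) * s ^ (-(2:ℝ)) + A ^ (-(2:ℝ)) * s ^ (-(j:ℝ)) := by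
      rw [hbdef, e, e]; norm_num
    have hterm1 : A ^ (-(j:ℝ)) * s ^ (-(2:ℝ)) ≤ b := by
      rw [hb']; exact le_add_of_nonneg_right (by positivity)
    have hterm2 : A ^ (-(2:ℝ)) * s ^ (-(j:ℝ)) ≤ b := by
      rw [hb']; exact le_add_of_nonneg_left (by positivity)
    have hji : (-(j:ℝ)) * ((i:ℝ)/(j:ℝ)) = -(i:ℝ) := by field_simp <;> ring
    have hji1 : (-(i:ℝ)) = -(j:ℝ) * ((i:ℝ)/(j:ℝ)) := hji.symm
    -- claim 2 : A^{-2} s^{-i} ≤ b^{i/j}, via term2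
    have hexp2 : -(2:ℝ) ≤ -(2:ℝ) * ((i:ℝ)/(j:ℝ)) := by nlinarith
    have hexpi : -(i:ℝ) ≤ -(2:ℝ) * ((i:ℝ)/(j:ℝ)) := by nlinarith
    have h1 : (A ^ (-(2:ℝ)) * s ^ (-(j:ℝ))) ^ ((i:ℝ)/(j:ℝ))
        = A ^ (-(2:ℝ) * ((i:ℝ)/(j:ℝ))) * s ^ (-(i:ℝ)) := by
      rw [rpow_prod_eq A s hA0 hs, hji]
    have hclaim2 : A ^ (-(2:ℝ)) * s ^ (-(i:ℝ)) ≤ b ^ ((i:ℝ)/(j:ℝ)) := by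
      calc A ^ (-(2:ℝ)) * s ^ (-(i:ℝ))
          ≤ A ^ (-(2:ℝ) * ((i:ℝ)/(j:ℝ))) * s ^ (-(i:ℝ)) :=
            mul_le_mul_of_nonneg_right
              (Real.rpow_le_rpow_of_exponent_le hA hexp2) (by positivity)
        _ = (A ^ (-(2:ℝ)) * s ^ (-(j:ℝ))) ^ ((i:ℝ)/(j:ℝ)) := h1.symm
        _ ≤ b ^ ((i:ℝ)/(j:ℝ)) := Real.rpow_le_rpow (by positivity) hterm2 hr0
    have hclaim1 : A ^ (-(i:ℝ)) * s ^ (-(2:ℝ)) ≤ b ^ ((i:ℝ)/(j:ℝ)) := by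
      rcases le_total 1 s with hs1 | hs1
      · -- s ≥ 1 : use term1
        have h1' : (A ^ (-(j:ℝ)) * s ^ (-(2:ℝ))) ^ ((i:ℝ)/(j:ℝ))
            = A ^ (-(i:ℝ)) * s ^ (-(2:ℝ) * ((i:ℝ)/(j:ℝ))) := by
          rw [rpow_prod_eq A s hA0 hs, hji]
        calc A ^ (-(i:ℝ)) * s ^ (-(2:ℝ))
            ≤ A ^ (-(i:ℝ)) * s ^ (-(2:ℝ) * ((i:ℝ)/(j:ℝ))) :=
              mul_le_mul_of_nonneg_left
                (Real.rpow_le_rpow_of_exponent_le hs1 hexp2) (by positivity)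
          _ = (A ^ (-(j:ℝ)) * s ^ (-(2:ℝ))) ^ ((i:ℝ)/(j:ℝ)) := h1'.symm
          _ ≤ b ^ ((i:ℝ)/(j:ℝ)) := Real.rpow_le_rpow (by positivity) hterm1 hr0
      · -- s ≤ 1 : use term2
        calc A ^ (-(i:ℝ)) * s ^ (-(2:ℝ))
            ≤ A ^ (-(2:ℝ) * ((i:ℝ)/(j:ℝ))) * s ^ (-(i:ℝ)) := by
              apply mul_le_mul (Real.rpow_le_rpow_of_exponent_le hA hexpi)
                (Real.rpow_le_rpow_of_exponent_ge hs0 hs1 (by linarith))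
                (by positivity) (by positivity)
          _ = (A ^ (-(2:ℝ)) * s ^ (-(j:ℝ))) ^ ((i:ℝ)/(j:ℝ)) := h1.symm
          _ ≤ b ^ ((i:ℝ)/(j:ℝ)) := Real.rpow_le_rpow (by positivity) hterm2 hr0
    calc (A^i * s^2)⁻¹ + (A^2 * s^i)⁻¹
        = A ^ (-(i:ℝ)) * s ^ (-(2:ℝ)) + A ^ (-(2:ℝ)) * s ^ (-(i:ℝ)) := by
          rw [e, e]; norm_num
      _ ≤ b ^ ((i:ℝ)/(j:ℝ)) + b ^ ((i:ℝ)/(j:ℝ)) := add_le_add hclaim1 hclaim2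
      _ = 2 * b ^ ((i:ℝ)/(j:ℝ)) := by ring

lemma key1 (j : ℕ) (hj : 1 ≤ j) (A s x : ℝ) (hA : 1 ≤ A) (hs : 0 ≤ s)
    (hx0 : 0 ≤ x) (hxA : x ≤ A) (hxs : x ≤ s) :
    x * (A^2 * s^2)⁻¹ ≤ ((A^j * s^2)⁻¹ + (A^2 * s^j)⁻¹) ^ ((1:ℝ)/(j:ℝ)) := by
  have hA0 : (0:ℝ) < A := lt_of_lt_of_le one_pos hA
  have hjR : (0:ℝ) < (j:ℝ) := by exact_mod_cast (by omega : 0 < j)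
  have hr0 : (0:ℝ) ≤ (1:ℝ)/(j:ℝ) := by positivity
  have hr1 : (1:ℝ)/(j:ℝ) ≤ 1 := by
    rw [div_le_one hjR]; exact_mod_cast hj
  rcases eq_or_lt_of_le hs with h0 | hs0
  · have hx : x = 0 := le_antisymm (h0 ▸ hxs) hx0
    rw [hx, zero_mul]
    positivity
  · have hx0' : 0 < s := hs0
    set b := (A^j * s^2)⁻¹ + (A^2 * s^j)⁻¹ with hbdef
    have e : ∀ n m : ℕ, (A^n * s^m)⁻¹ = A ^ (-(n:ℝ)) * s ^ (-(m:ℝ)) := by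
      intro n m
      rw [mul_inv, inv_pow_eq_rpow A hA0.le, inv_pow_eq_rpow s hs]
    have hb' : b = A ^ (-(j:ℝ)) * s ^ (-(2:ℝ)) + A ^ (-(2:ℝ)) * s ^ (-(j:ℝ)) := by
      rw [hbdef, e, e]; norm_num
    have hterm1 : A ^ (-(j:ℝ)) * s ^ (-(2:ℝ)) ≤ b := by
      rw [hb']; exact le_add_of_nonneg_right (by positivity)
    have hterm2 : A ^ (-(2:ℝ)) * s ^ (-(j:ℝ)) ≤ b := by
      rw [hb']; exact le_add_of_nonneg_left (by positivity)
    have hj1 : (-(j:ℝ)) * ((1:ℝ)/(j:ℝ)) = -(1:ℝ) := by field_simp <;> ring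
    have hLHS : x * (A^2 * s^2)⁻¹ = x * (A ^ (-(2:ℝ)) * s ^ (-(2:ℝ))) := by
      rw [e]; norm_num
    rw [hLHS]
    rcases le_total 1 s with hs1 | hs1
    · -- s ≥ 1 : x*(A^-2 s^-2) ≤ A^{-1} s^{-2} ≤ A^{-1} s^{-2/j} = (A^-j s^-2)^{1/j}
      have h1' : (A ^ (-(j:ℝ)) * s ^ (-(2:ℝ))) ^ ((1:ℝ)/(j:ℝ))
          = A ^ (-(1:ℝ)) * s ^ (-(2:ℝ) * ((1:ℝ)/(j:ℝ))) := by
        rw [rpow_prod_eq A s hA0 hs, hj1]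
      have hxa : x * A ^ (-(2:ℝ)) ≤ A ^ (-(1:ℝ)) := by
        have : A * A ^ (-(2:ℝ)) = A ^ (-(1:ℝ)) := by
          rw [show A * A ^ (-(2:ℝ)) = A ^ (1:ℝ) * A ^ (-(2:ℝ)) by rw [Real.rpow_one],
            ← Real.rpow_add hA0]
          norm_num
        calc x * A ^ (-(2:ℝ)) ≤ A * A ^ (-(2:ℝ)) :=
              mul_le_mul_of_nonneg_right hxA (by positivity)
          _ = A ^ (-(1:ℝ)) := this
      calc x * (A ^ (-(2:ℝ)) * s ^ (-(2:ℝ)))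
          = (x * A ^ (-(2:ℝ))) * s ^ (-(2:ℝ)) := by ring
        _ ≤ A ^ (-(1:ℝ)) * s ^ (-(2:ℝ)) :=
            mul_le_mul_of_nonneg_right hxa (by positivity)
        _ ≤ A ^ (-(1:ℝ)) * s ^ (-(2:ℝ) * ((1:ℝ)/(j:ℝ))) :=
            mul_le_mul_of_nonneg_left
              (Real.rpow_le_rpow_of_exponent_le hs1 (by nlinarith)) (by positivity)
        _ = (A ^ (-(j:ℝ)) * s ^ (-(2:ℝ))) ^ ((1:ℝ)/(j:ℝ)) := h1'.symm
        _ ≤ b ^ ((1:ℝ)/(j:ℝ)) := Real.rpow_le_rpow (by positivity) hterm1 hr0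
    · -- s ≤ 1 : x*(A^-2 s^-2) ≤ A^{-2} s^{-1} ≤ A^{-2/j} s^{-1} = (A^-2 s^-j)^{1/j}
      have h1' : (A ^ (-(2:ℝ)) * s ^ (-(j:ℝ))) ^ ((1:ℝ)/(j:ℝ))
          = A ^ (-(2:ℝ) * ((1:ℝ)/(j:ℝ))) * s ^ (-(1:ℝ)) := by
        rw [rpow_prod_eq A s hA0 hs, hj1]
      have hxa : x * s ^ (-(2:ℝ)) ≤ s ^ (-(1:ℝ)) := by
        have : s * s ^ (-(2:ℝ)) = s ^ (-(1:ℝ)) := by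
          rw [show s * s ^ (-(2:ℝ)) = s ^ (1:ℝ) * s ^ (-(2:ℝ)) by rw [Real.rpow_one],
            ← Real.rpow_add hs0]
          norm_num
        calc x * s ^ (-(2:ℝ)) ≤ s * s ^ (-(2:ℝ)) :=
              mul_le_mul_of_nonneg_right hxs (by positivity)
          _ = s ^ (-(1:ℝ)) := this
      calc x * (A ^ (-(2:ℝ)) * s ^ (-(2:ℝ)))
          = A ^ (-(2:ℝ)) * (x * s ^ (-(2:ℝ))) := by ring
        _ ≤ A ^ (-(2:ℝ)) * s ^ (-(1:ℝ)) :=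
            mul_le_mul_of_nonneg_left hxa (by positivity)
        _ ≤ A ^ (-(2:ℝ) * ((1:ℝ)/(j:ℝ))) * s ^ (-(1:ℝ)) :=
            mul_le_mul_of_nonneg_right
              (Real.rpow_le_rpow_of_exponent_le hA (by nlinarith)) (by positivity)
        _ = (A ^ (-(2:ℝ)) * s ^ (-(j:ℝ))) ^ ((1:ℝ)/(j:ℝ)) := h1'.symm
        _ ≤ b ^ ((1:ℝ)/(j:ℝ)) := Real.rpow_le_rpow (by positivity) hterm2 hr0


lemma mu_pow_ge (M : ℝ) (hM : 0 ≤ M) (j i : ℕ) (hj : 1 ≤ j) (h1i : 1 ≤ i) (hij : i ≤ j) :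
    M ≤ (max M (M ^ ((1:ℝ)/(j:ℝ)))) ^ i := by
  have hjR : (0:ℝ) < (j:ℝ) := by exact_mod_cast (by omega : 0 < j)
  rcases eq_or_lt_of_le hM with h0 | hM0
  · rw [← h0, ← Real.rpow_natCast]
    positivity
  · rcases le_total M 1 with hM1 | hM1
    · have h1 : M = M ^ (1:ℝ) := (Real.rpow_one M).symm
      have h2 : M ^ (1:ℝ) ≤ M ^ (((1:ℝ)/(j:ℝ)) * (i:ℝ)) := by
        apply Real.rpow_le_rpow_of_exponent_ge hM0 hM1
        rw [div_mul_eq_mul_div, one_mul, div_le_one hjR]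
        exact_mod_cast hij
      have h3 : M ^ (((1:ℝ)/(j:ℝ)) * (i:ℝ)) = (M ^ ((1:ℝ)/(j:ℝ))) ^ i := by
        rw [Real.rpow_mul hM, Real.rpow_natCast]
      calc M = M ^ (1:ℝ) := h1
        _ ≤ M ^ (((1:ℝ)/(j:ℝ)) * (i:ℝ)) := h2
        _ = (M ^ ((1:ℝ)/(j:ℝ))) ^ i := h3
        _ ≤ (max M (M ^ ((1:ℝ)/(j:ℝ)))) ^ i :=
            pow_le_pow_left₀ (by positivity) (le_max_right _ _) i
    · calc M ≤ M ^ i := le_self_pow₀ hM1 (by omega)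
        _ ≤ (max M (M ^ ((1:ℝ)/(j:ℝ)))) ^ i :=
            pow_le_pow_left₀ hM (le_max_left _ _) i

lemma mu_pow_le (M : ℝ) (hM : 0 ≤ M) (j : ℕ) (hj : 1 ≤ j) :
    (max M (M ^ ((1:ℝ)/(j:ℝ)))) ^ j ≤ M * (1 + M) ^ (j-1) := by
  have hjR : (0:ℝ) < (j:ℝ) := by exact_mod_cast (by omega : 0 < j)
  have hone : (1:ℝ) ≤ (1 + M) ^ (j-1) := one_le_pow₀ (by linarith)
  rcases eq_or_lt_of_le hM with h0 | hM0
  · rw [← h0]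
    rw [Real.zero_rpow (by positivity)]
    simp [zero_pow (by omega : j ≠ 0)]
  · rcases le_total M 1 with hM1 | hM1
    · have hmax : max M (M ^ ((1:ℝ)/(j:ℝ))) = M ^ ((1:ℝ)/(j:ℝ)) := by
        apply max_eq_right
        nth_rewrite 1 [← Real.rpow_one M]
        apply Real.rpow_le_rpow_of_exponent_ge hM0 hM1
        rw [div_le_one hjR]
        exact_mod_cast hj
      rw [hmax, ← Real.rpow_natCast (M ^ ((1:ℝ)/(j:ℝ))) j, ← Real.rpow_mul hM]
      rw [show (1:ℝ)/(j:ℝ) * (j:ℝ) = 1 by field_simp, Real.rpow_one]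
      exact le_mul_of_one_le_right hM hone
    · have hmax : max M (M ^ ((1:ℝ)/(j:ℝ))) = M := by
        apply max_eq_left
        nth_rewrite 2 [← Real.rpow_one M]
        apply Real.rpow_le_rpow_of_exponent_le hM1
        rw [div_le_one hjR]
        exact_mod_cast hj
      rw [hmax]
      have : M ^ j = M * M ^ (j-1) := by
        nth_rewrite 1 [show j = 1 + (j-1) by omega]
        rw [pow_add, pow_one]
      rw [this]
      apply mul_le_mul_of_nonneg_left _ hM
      exact pow_le_pow_left₀ hM (by linarith) _


open MeasureTheory



/-- under the Penrose-type lower bound `|1-K̃| ≥ c̊` and the stated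
`ξ`-derivative bounds on `K̃`, the function `G̃ = K̃/(1-K̃)` satisfies for `j ≥ 1`:
`|∇_ξ^j G̃(τ,ξ)| ≤ C(c̊,j,d) M (1+M)^{j-1} (⟨ξ⟩^{-j}(|τ|+|ξ|)^{-2} + ⟨ξ⟩^{-2}(|τ|+|ξ|)^{-j})`. -/
theorem Gtilde_xi_deriv_bound (d j : ℕ) (hj : 1 ≤ j) (c : ℝ) (hc : 0 < c) :
    ∃ C : ℝ, 0 < C ∧
      ∀ (K : ℝ → EuclideanSpace ℝ (Fin d) → ℂ) (M : ℝ), 0 ≤ M →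
        (∀ τ, ContDiff ℝ j (K τ)) →
        (∀ τ ξ, c ≤ ‖1 - K τ ξ‖) →
        (∀ (τ : ℝ) (ξ : EuclideanSpace ℝ (Fin d)), ∀ i, 1 ≤ i → i ≤ j →
          ‖iteratedFDeriv ℝ i (K τ) ξ‖
            ≤ M * (Real.sqrt (1 + ‖ξ‖ ^ 2) ^ i * (|τ| + ‖ξ‖) ^ 2)⁻¹
              + M * (Real.sqrt (1 + ‖ξ‖ ^ 2) ^ 2 * (|τ| + ‖ξ‖) ^ i)⁻¹) →
        (∀ (τ : ℝ) (ξ : EuclideanSpace ℝ (Fin d)),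
          ‖iteratedFDeriv ℝ 1 (K τ) ξ‖
            ≤ M * ‖ξ‖ * (Real.sqrt (1 + ‖ξ‖ ^ 2) ^ 2 * (|τ| + ‖ξ‖) ^ 2)⁻¹) →
        ∀ (τ : ℝ) (ξ : EuclideanSpace ℝ (Fin d)),
          ‖iteratedFDeriv ℝ j (fun ξ' => K τ ξ' / (1 - K τ ξ')) ξ‖
            ≤ C * M * (1 + M) ^ (j - 1)
                * ((Real.sqrt (1 + ‖ξ‖ ^ 2) ^ j * (|τ| + ‖ξ‖) ^ 2)⁻¹
                  + (Real.sqrt (1 + ‖ξ‖ ^ 2) ^ 2 * (|τ| + ‖ξ‖) ^ j)⁻¹) := by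

  set C₀ : ℝ := (Nat.factorial j) * (1 + 1/c) ^ (j+1) + (1 + 1/c) with hC₀
  have hC₀pos : 0 < C₀ := by positivity
  refine ⟨(Nat.factorial j) * C₀ * 2 ^ j, by positivity, ?_⟩
  intro K M hM hK hpen hbound hbound1 τ ξ
  set A : ℝ := Real.sqrt (1 + ‖ξ‖ ^ 2) with hAdef
  set s : ℝ := |τ| + ‖ξ‖ with hsdef
  have hA : 1 ≤ A := by
    rw [hAdef]
    have h1 : Real.sqrt 1 ≤ Real.sqrt (1 + ‖ξ‖^2) :=
      Real.sqrt_le_sqrt (by nlinarith [sq_nonneg ‖ξ‖])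
    simpa using h1
  have hA0 : (0:ℝ) < A := lt_of_lt_of_le one_pos hA
  have hs : (0:ℝ) ≤ s := by positivity
  have hxs : ‖ξ‖ ≤ s := by rw [hsdef]; exact le_add_of_nonneg_left (abs_nonneg τ)
  have hxA : ‖ξ‖ ≤ A := by
    have h := Real.sqrt_le_sqrt (show ‖ξ‖^2 ≤ 1 + ‖ξ‖^2 by linarith)
    rwa [Real.sqrt_sq (norm_nonneg _)] at h
  set b : ℝ := (A ^ j * s ^ 2)⁻¹ + (A ^ 2 * s ^ j)⁻¹ with hbdef
  have hb0 : 0 ≤ b := by positivity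
  set μ : ℝ := max M (M ^ ((1:ℝ)/(j:ℝ))) with hmu
  have hμ0 : 0 ≤ μ := le_trans hM (le_max_left _ _)
  set E : ℝ := 2 * b ^ ((1:ℝ)/(j:ℝ)) with hE
  have hE0 : 0 ≤ E := by positivity
  set D : ℝ := μ * E with hD
  -- the outer function
  set g : ℂ → ℂ := fun z => z / (1 - z) with hg
  set t : Set ℂ := {z : ℂ | z ≠ 1} with ht
  have hopen : IsOpen t := isOpen_ne
  have hgC : ContDiffOn ℂ (j:ℕ) g t :=
    ContDiffOn.div contDiffOn_id (contDiffOn_const.sub contDiffOn_id)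
      (fun z hz => sub_ne_zero.2 (Ne.symm hz))
  have hgR : ContDiffOn ℝ (j:ℕ) g t := hgC.restrict_scalars ℝ
  have hmaps : Set.MapsTo (K τ) Set.univ t := by
    intro ξ' _
    have := hpen τ ξ'
    simp only [ht, Set.mem_setOf_eq]
    intro h
    rw [h] at this
    simp at this
    linarith
  -- bounds on derivatives of g at K τ ξ
  have hC : ∀ i, i ≤ j → ‖iteratedFDerivWithin ℝ i g t (K τ ξ)‖ ≤ C₀ :=
    fun i hi => gbound j c hc (K τ ξ) (hpen τ ξ) i hi
  -- bounds on derivatives of K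
  have hrpow_pow : ∀ i : ℕ, (b ^ ((1:ℝ)/(j:ℝ))) ^ i = b ^ ((i:ℝ)/(j:ℝ)) := by
    intro i
    rw [← Real.rpow_natCast (b ^ ((1:ℝ)/(j:ℝ))) i, ← Real.rpow_mul hb0]
    congr 1
    ring
  have hD_bound : ∀ i, 1 ≤ i → i ≤ j →
      ‖iteratedFDerivWithin ℝ i (K τ) Set.univ ξ‖ ≤ D ^ i := by
    intro i h1i hij
    rw [iteratedFDerivWithin_univ]
    have hDi : D ^ i = μ ^ i * (2 ^ i * b ^ ((i:ℝ)/(j:ℝ))) := by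
      rw [hD, mul_pow, hE, mul_pow, hrpow_pow]
    rw [hDi]
    have hMμ : M ≤ μ ^ i := mu_pow_ge M hM j i hj h1i hij
    rcases eq_or_lt_of_le h1i with h1 | h2
    · -- i = 1
      have hi1 : i = 1 := h1.symm
      subst hi1
      have hb1 := hbound1 τ ξ
      have hk1 : ‖ξ‖ * (A ^ 2 * s ^ 2)⁻¹ ≤ b ^ ((1:ℝ)/(j:ℝ)) :=
        key1 j hj A s ‖ξ‖ hA hs (norm_nonneg _) hxA hxs
      calc ‖iteratedFDeriv ℝ 1 (K τ) ξ‖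
          ≤ M * ‖ξ‖ * (A ^ 2 * s ^ 2)⁻¹ := hb1
        _ = M * (‖ξ‖ * (A ^ 2 * s ^ 2)⁻¹) := by ring
        _ ≤ μ ^ 1 * (2 ^ 1 * b ^ ((1:ℝ)/(j:ℝ))) := by
            apply mul_le_mul hMμ _ (by positivity) (by positivity)
            calc ‖ξ‖ * (A ^ 2 * s ^ 2)⁻¹ ≤ b ^ ((1:ℝ)/(j:ℝ)) := hk1
              _ ≤ 2 ^ 1 * b ^ ((1:ℝ)/(j:ℝ)) := by
                  nlinarith [Real.rpow_nonneg hb0 ((1:ℝ)/(j:ℝ))]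
        _ = μ ^ 1 * (2 ^ 1 * b ^ (((1:ℕ):ℝ)/((j:ℕ):ℝ))) := by rw [Nat.cast_one]
    · -- 2 ≤ i
      have h2i : 2 ≤ i := h2
      have hbi := hbound τ ξ i h1i hij
      have hk2 : (A^i * s^2)⁻¹ + (A^2 * s^i)⁻¹ ≤ 2 * b ^ ((i:ℝ)/(j:ℝ)) :=
        key2 j i h2i hij A s hA hs
      have h2pow : (2:ℝ) ≤ 2 ^ i := by
        calc (2:ℝ) = 2 ^ 1 := (pow_one 2).symm
          _ ≤ 2 ^ i := pow_le_pow_right₀ one_le_two h1i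
      calc ‖iteratedFDeriv ℝ i (K τ) ξ‖
          ≤ M * (A ^ i * s ^ 2)⁻¹ + M * (A ^ 2 * s ^ i)⁻¹ := hbi
        _ = M * ((A ^ i * s ^ 2)⁻¹ + (A ^ 2 * s ^ i)⁻¹) := by ring
        _ ≤ μ ^ i * (2 ^ i * b ^ ((i:ℝ)/(j:ℝ))) := by
            apply mul_le_mul hMμ _ (by positivity) (by positivity)
            calc (A ^ i * s ^ 2)⁻¹ + (A ^ 2 * s ^ i)⁻¹
                ≤ 2 * b ^ ((i:ℝ)/(j:ℝ)) := hk2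
              _ ≤ 2 ^ i * b ^ ((i:ℝ)/(j:ℝ)) := by
                  apply mul_le_mul_of_nonneg_right h2pow (by positivity)
  -- the composition bound
  have hcomp := norm_iteratedFDerivWithin_comp_le (𝕜 := ℝ) (g := g) (f := K τ)
    (n := j) (N := (j : ℕ∞)) hgR ((hK τ).contDiffOn) le_rfl
    hopen.uniqueDiffOn uniqueDiffOn_univ hmaps (Set.mem_univ ξ) hC hD_bound
  rw [iteratedFDerivWithin_univ] at hcomp
  have hfun : (fun ξ' => K τ ξ' / (1 - K τ ξ')) = g ∘ (K τ) := rfl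
  rw [hfun]
  have hmuj : μ ^ j ≤ M * (1 + M) ^ (j-1) := mu_pow_le M hM j hj
  have hDj : D ^ j = μ ^ j * (2 ^ j * b) := by
    rw [hD, mul_pow, hE, mul_pow, hrpow_pow]
    congr 2
    rw [show ((j:ℕ):ℝ)/((j:ℕ):ℝ) = 1 by
      field_simp]
    exact Real.rpow_one b
  calc ‖iteratedFDeriv ℝ j (g ∘ K τ) ξ‖
      ≤ (Nat.factorial j) * C₀ * D ^ j := hcomp
    _ = (Nat.factorial j) * C₀ * (μ ^ j * (2 ^ j * b)) := by rw [hDj]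
    _ ≤ (Nat.factorial j) * C₀ * ((M * (1 + M) ^ (j-1)) * (2 ^ j * b)) := by
        apply mul_le_mul_of_nonneg_left _ (by positivity)
        apply mul_le_mul_of_nonneg_right hmuj (by positivity)
    _ = (Nat.factorial j) * C₀ * 2 ^ j * M * (1 + M) ^ (j-1) * b := by ring
end

section
/- Let d ≥ 3 and 0 < b₀ < 1. Suppose G : (0,∞)×ℝ^d → ℝ satisfies |G(t,x)| ≤ M₀ (t+|x|)^{-(d-1)}(1+t+|x|)^{-2} and |∇_x G(t,x)| ≤ M₁ (t+|x|)^{-d}(1+t+|x|)^{-2}. Then for every α ∈ ℝ^d ∖ {0}, ∫_{ℝ^d} |x|^{b₀} |G(t,x) - G(t,x-α)| dx ≤ C(d,b₀) [ M₁ |α| (1+t+|α|)^{-(2-b₀)} + M₁ 1_{|α|>t} |α|^{b₀}(1+t)^{-1} + M₁ 1_{|α|≤t} |α|^{d+b₀} t^{-(d-1)}(1+t)^{-2} ] (assuming M₀ ≤ M₁). -/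
open MeasureTheory Set Real
set_option maxHeartbeats 1000000

section helpers

lemma aux_ioc_rpow_int (s p : ℝ) (hs : 0 < s) (hp : -1 < p) :
    IntegrableOn (fun r : ℝ => r ^ p) (Ioc 0 s) := by
  have := (intervalIntegral.intervalIntegrable_rpow' (a := 0) (b := s) hp)
  rwa [intervalIntegrable_iff_integrableOn_Ioc_of_le hs.le] at this

lemma aux_ioc_rpow_val (s p : ℝ) (hs : 0 < s) (hp : -1 < p) :
    (∫ r in Ioc 0 s, r ^ p) = s ^ (p+1) / (p+1) := by
  rw [← _root_.intervalIntegral.integral_of_le hs.le,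
    _root_.integral_rpow (Or.inl hp), Real.zero_rpow (by linarith)]
  ring

lemma aux_ioi_rpow_val (s q : ℝ) (hs : 0 < s) (hq : q < -1) :
    (∫ r in Ioi s, r ^ q) = s ^ (q+1) / (-(q+1)) := by
  rw [integral_Ioi_rpow_of_lt hq hs]
  rw [div_neg, neg_div]

lemma aux_mvt {E : Type*} [NormedAddCommGroup E] [NormedSpace ℝ E]
    (f : E → ℝ) (hf : Differentiable ℝ f) (t M₁ : ℝ) (ht : 0 < t) (hM₁ : 0 ≤ M₁) (d : ℕ)
    (hb : ∀ y : E, ‖fderiv ℝ f y‖ ≤ M₁ / ((t + ‖y‖) ^ d * (1 + t + ‖y‖) ^ 2))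
    (x α : E) (hx : 2 * ‖α‖ ≤ ‖x‖) :
    |f x - f (x - α)| ≤ M₁ * 2^(d+2) / ((t + ‖x‖) ^ d * (1 + t + ‖x‖) ^ 2) * ‖α‖ := by
  have hA : 0 ≤ ‖α‖ := norm_nonneg _
  have hxpos : 0 ≤ ‖x‖ := norm_nonneg _
  have key : ∀ y ∈ segment ℝ (x - α) x, ‖fderiv ℝ f y‖ ≤
      M₁ * 2^(d+2) / ((t + ‖x‖) ^ d * (1 + t + ‖x‖) ^ 2) := by
    intro y hy
    obtain ⟨a, b, ha, hb', hab, rfl⟩ := hy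
    have hyn : ‖x‖ / 2 ≤ ‖a • (x - α) + b • x‖ := by
      have : a • (x - α) + b • x = x - a • α := by
        have hb1 : b = 1 - a := by linarith
        rw [hb1]; module
      rw [this]
      have h1 : ‖x‖ - ‖a • α‖ ≤ ‖x - a • α‖ := norm_sub_norm_le _ _ |>.trans (le_refl _)
      have h2 : ‖a • α‖ ≤ ‖α‖ := by
        rw [norm_smul, Real.norm_eq_abs, abs_of_nonneg ha]
        nlinarith [norm_nonneg α]
      nlinarith
    set y := a • (x - α) + b • x
    have h1 : (t + ‖x‖) / 2 ≤ t + ‖y‖ := by linarith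
    have h2 : (1 + t + ‖x‖) / 2 ≤ 1 + t + ‖y‖ := by linarith
    have hd1 : ((t + ‖x‖) / 2) ^ d ≤ (t + ‖y‖) ^ d :=
      pow_le_pow_left₀ (by positivity) h1 d
    have hd2 : ((1 + t + ‖x‖) / 2) ^ 2 ≤ (1 + t + ‖y‖) ^ 2 :=
      pow_le_pow_left₀ (by positivity) h2 2
    refine (hb y).trans ?_
    have hden : (t + ‖x‖) ^ d * (1 + t + ‖x‖) ^ 2 / 2 ^ (d + 2) ≤
        (t + ‖y‖) ^ d * (1 + t + ‖y‖) ^ 2 := by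
      rw [pow_add]
      calc (t + ‖x‖) ^ d * (1 + t + ‖x‖) ^ 2 / (2 ^ d * 2 ^ 2)
          = ((t + ‖x‖) ^ d / 2 ^ d) * ((1 + t + ‖x‖) ^ 2 / 2 ^ 2) := by ring
        _ ≤ _ := by
            rw [← div_pow, ← div_pow]
            apply mul_le_mul hd1 hd2 (by positivity) (by positivity)
    rw [div_le_div_iff₀ (by positivity) (by positivity)] at *
    calc M₁ * ((t + ‖x‖) ^ d * (1 + t + ‖x‖) ^ 2)
        ≤ M₁ * (2 ^ (d+2) * ((t + ‖y‖) ^ d * (1 + t + ‖y‖) ^ 2)) := by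
          apply mul_le_mul_of_nonneg_left _ hM₁
          rw [div_le_iff₀ (by positivity)] at hden
          linarith [hden]
      _ = M₁ * 2 ^ (d + 2) * ((t + ‖y‖) ^ d * (1 + t + ‖y‖) ^ 2) := by ring
  have := Convex.norm_image_sub_le_of_norm_fderiv_le
    (f := f) (fun y _ => hf.differentiableAt) key (convex_segment _ _)
    (left_mem_segment ℝ (x - α) x) (right_mem_segment ℝ (x - α) x)
  simpa [sub_sub_cancel] using this

end helpers


/-- weighted `L¹` bound for the finite difference `δ_α G`:
`∫ |x|^{b₀} |G(t,x) - G(t,x-α)| dx ≤ C [ M₁|α|(1+t+|α|)^{-(2-b₀)}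
  + M₁ 1_{|α|>t} |α|^{b₀}(1+t)^{-1} + M₁ 1_{|α|≤t} |α|^{d+b₀} t^{-(d-1)}(1+t)^{-2} ]`. -/
theorem weighted_L1_difference_bound (d : ℕ) (hd : 3 ≤ d)
    (b₀ : ℝ) (hb₀ : 0 < b₀) (hb₀' : b₀ < 1) :
    ∃ C : ℝ, 0 < C ∧
      ∀ (G : ℝ → EuclideanSpace ℝ (Fin d) → ℝ) (M₀ M₁ : ℝ),
        0 ≤ M₀ → M₀ ≤ M₁ →
        (∀ t, 0 < t → Differentiable ℝ (G t)) →
        (∀ (t : ℝ) (x : EuclideanSpace ℝ (Fin d)), 0 < t →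
          |G t x| ≤ M₀ / ((t + ‖x‖) ^ (d - 1) * (1 + t + ‖x‖) ^ 2)) →
        (∀ (t : ℝ) (x : EuclideanSpace ℝ (Fin d)), 0 < t →
          ‖fderiv ℝ (G t) x‖ ≤ M₁ / ((t + ‖x‖) ^ d * (1 + t + ‖x‖) ^ 2)) →
        ∀ (t : ℝ) (α : EuclideanSpace ℝ (Fin d)), 0 < t → α ≠ 0 →
          (∫ x : EuclideanSpace ℝ (Fin d), ‖x‖ ^ b₀ * |G t x - G t (x - α)|)
            ≤ C * (M₁ * ‖α‖ / (1 + t + ‖α‖) ^ (2 - b₀)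
                + (if t < ‖α‖ then (1 : ℝ) else 0) * M₁ * ‖α‖ ^ b₀ / (1 + t)
                + (if ‖α‖ ≤ t then (1 : ℝ) else 0) * M₁ * ‖α‖ ^ ((d : ℝ) + b₀)
                    / (t ^ (d - 1) * (1 + t) ^ 2)) := by
  have hd1 : 1 ≤ d := by omega
  haveI : Nontrivial (EuclideanSpace ℝ (Fin d)) := by
    refine Module.nontrivial_of_finrank_pos (R := ℝ) ?_
    simp only [finrank_euclideanSpace_fin]; omega
  set κ := (d : ℝ) * (volume (Metric.ball (0 : EuclideanSpace ℝ (Fin d)) 1)).toReal with hκdef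
  have hκ : 0 ≤ κ := by positivity
  set cb := 1/b₀ + 1/(2-b₀) with hcbdef
  have hcb : 0 < cb := by
    have : 0 < 2 - b₀ := by linarith
    positivity
  set C₁ := κ * 2^(d+2) * cb with hC₁def
  set C₂ := κ * 2^b₀ * 4 with hC₂def
  set C₃ := κ * 2^b₀ * 2 * 3^d / d with hC₃def
  have hC₁ : 0 ≤ C₁ := by positivity
  have hC₂ : 0 ≤ C₂ := by positivity
  have hC₃ : 0 ≤ C₃ := by positivity
  refine ⟨C₁ + C₂ + C₃ + 1, by positivity, ?_⟩
  intro G M₀ M₁ hM₀ hM01 hdiff hG hG' t α ht hα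
  have hM₁ : 0 ≤ M₁ := hM₀.trans hM01
  set A := ‖α‖ with hAdef
  have hA : 0 < A := norm_pos_iff.2 hα
  set s := 1 + t + A with hsdef
  have hs : 0 < s := by positivity
  set m := min t 1 with hmdef
  have hm0 : 0 < m := lt_min ht one_pos
  have hmt : m ≤ t := min_le_left _ _
  have hm1 : m ≤ 1 := min_le_right _ _
  set g₁ : ℝ → ℝ := fun r => Set.indicator (Ici (2*A))
    (fun r => r ^ b₀ / ((t+r)^d * (1+t+r)^2)) r with hg₁def
  set φ : ℝ → ℝ := fun r => Set.indicator (Ico 0 (3*A))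
    (fun r => ((t+r)^(d-1) * (1+t+r)^2)⁻¹) r with hφdef
  have hg₁nn : ∀ r, 0 ≤ g₁ r := fun r =>
    Set.indicator_nonneg (fun y hy => by
      have : (0:ℝ) < 2*A := by positivity
      have hy0 : 0 ≤ y := le_trans this.le hy
      positivity) r
  have hφnn : ∀ r, 0 ≤ φ r := fun r =>
    Set.indicator_nonneg (fun y hy => by
      have hy0 : 0 ≤ y := hy.1
      positivity) r
  have hg₁m : Measurable g₁ := by
    apply Measurable.indicator _ measurableSet_Ici
    fun_prop
  have hφm : Measurable φ := by
    apply Measurable.indicator _ measurableSet_Ico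
    fun_prop
  -- base integrable function
  have hbase : Integrable (fun x : EuclideanSpace ℝ (Fin d) => (1+‖x‖) ^ (-((d:ℝ)+1))) := by
    apply integrable_one_add_norm (E := EuclideanSpace ℝ (Fin d))
    simp only [finrank_euclideanSpace_fin]
    linarith
  -- pointwise radial domination for integrability
  have hratio : ∀ r : ℝ, 0 ≤ r → (1+r)/((1+r)^d * (1+r)^2) = (1+r) ^ (-((d:ℝ)+1)) := by
    intro r hr
    have h0 : (0:ℝ) < 1 + r := by linarith
    calc (1+r)/((1+r)^d*(1+r)^2) = (1+r)^(1:ℝ) / (1+r)^(((d+2:ℕ)):ℝ) := by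
          rw [Real.rpow_one, Real.rpow_natCast, pow_add]
      _ = (1+r)^((1:ℝ) - ((d+2:ℕ):ℝ)) := (Real.rpow_sub h0 _ _).symm
      _ = (1+r)^(-((d:ℝ)+1)) := by push_cast; ring_nf
  have hg₁bd : ∀ r : ℝ, 0 ≤ r → g₁ r ≤ m⁻¹^d * (1+r) ^ (-((d:ℝ)+1)) := by
    intro r hr
    simp only [hg₁def]
    by_cases hmem : r ∈ Ici (2*A)
    · rw [Set.indicator_of_mem hmem]
      have e1 : r^b₀ ≤ 1+r := by
        calc r ^ b₀ ≤ (1+r)^b₀ := Real.rpow_le_rpow hr (by linarith) hb₀.le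
          _ ≤ (1+r)^(1:ℝ) := Real.rpow_le_rpow_of_exponent_le (by linarith) hb₀'.le
          _ = 1+r := Real.rpow_one _
      have e2 : m^d*(1+r)^d ≤ (t+r)^d := by
        rw [← mul_pow]; exact pow_le_pow_left₀ (by positivity) (by nlinarith) d
      have e3 : (1+r)^2 ≤ (1+t+r)^2 := pow_le_pow_left₀ (by positivity) (by linarith) 2
      calc r^b₀/((t+r)^d*(1+t+r)^2) ≤ (1+r)/((m^d*(1+r)^d)*((1+r)^2)) := by
            apply div_le_div₀ (by positivity) e1 (by positivity)
            exact mul_le_mul e2 e3 (by positivity) (by positivity)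
        _ = m⁻¹^d * ((1+r)/((1+r)^d*(1+r)^2)) := by
            rw [inv_pow]
            field_simp
        _ = m⁻¹^d * (1+r)^(-((d:ℝ)+1)) := by rw [hratio r hr]
    · rw [Set.indicator_of_notMem hmem]
      exact mul_nonneg (by positivity) (Real.rpow_nonneg (by linarith) _)
  have hφbd : ∀ r : ℝ, 0 ≤ r → φ r ≤ m⁻¹^(d-1) * (1+r) ^ (-((d:ℝ)+1)) := by
    intro r hr
    simp only [hφdef]
    by_cases hmem : r ∈ Ico 0 (3*A)
    · rw [Set.indicator_of_mem hmem]
      have e2 : m^(d-1)*(1+r)^(d-1) ≤ (t+r)^(d-1) := by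
        rw [← mul_pow]; exact pow_le_pow_left₀ (by positivity) (by nlinarith) (d-1)
      have e3 : (1+r)^2 ≤ (1+t+r)^2 := pow_le_pow_left₀ (by positivity) (by linarith) 2
      have hinv : (((1+r):ℝ)^(d+1))⁻¹ = (1+r)^(-((d:ℝ)+1)) := by
        rw [← Real.rpow_natCast (1+r) (d+1), ← Real.rpow_neg (by linarith)]
        push_cast; ring_nf
      calc ((t+r)^(d-1) * (1+t+r)^2)⁻¹ ≤ ((m^(d-1)*(1+r)^(d-1))*((1+r)^2))⁻¹ := by
            apply inv_anti₀ (by positivity)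
            exact mul_le_mul e2 e3 (by positivity) (by positivity)
        _ = m⁻¹^(d-1) * (((1+r):ℝ)^(d+1))⁻¹ := by
            have hpe : (1+r)^(d-1)*(1+r)^2 = (1+r)^(d+1) := by
              rw [← pow_add]; congr 1; omega
            rw [mul_assoc, hpe, mul_inv, inv_pow]
        _ = m⁻¹^(d-1) * (1+r)^(-((d:ℝ)+1)) := by rw [hinv]
    · rw [Set.indicator_of_notMem hmem]
      exact mul_nonneg (by positivity) (Real.rpow_nonneg (by linarith) _)
  have hint1 : Integrable (fun x : EuclideanSpace ℝ (Fin d) => g₁ ‖x‖) := by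
    refine (hbase.const_mul (m⁻¹^d)).mono'
      ((hg₁m.comp measurable_norm).aestronglyMeasurable) (ae_of_all _ fun x => ?_)
    rw [Real.norm_eq_abs, abs_of_nonneg (hg₁nn _)]
    exact hg₁bd _ (norm_nonneg x)
  have hint2 : Integrable (fun x : EuclideanSpace ℝ (Fin d) => φ ‖x‖) := by
    refine (hbase.const_mul (m⁻¹^(d-1))).mono'
      ((hφm.comp measurable_norm).aestronglyMeasurable) (ae_of_all _ fun x => ?_)
    rw [Real.norm_eq_abs, abs_of_nonneg (hφnn _)]
    exact hφbd _ (norm_nonneg x)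
  have hint3 : Integrable (fun x : EuclideanSpace ℝ (Fin d) => φ ‖x - α‖) :=
    hint2.comp_sub_right α
  set c₁ := M₁ * A * 2^(d+2) with hc₁def
  have hc₁nn : 0 ≤ c₁ := by positivity
  set w := (2*A) ^ b₀ * M₀ with hwdef
  have hwnn : 0 ≤ w := by positivity
  set h : EuclideanSpace ℝ (Fin d) → ℝ :=
    fun x => c₁ * g₁ ‖x‖ + w * φ ‖x‖ + w * φ ‖x - α‖ with hhdef
  have hinth : Integrable h :=
    ((hint1.const_mul c₁).add (hint2.const_mul w)).add (hint3.const_mul w)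
  -- pointwise bound
  have hpt : ∀ x : EuclideanSpace ℝ (Fin d),
      ‖x‖ ^ b₀ * |G t x - G t (x - α)| ≤ h x := by
    intro x
    have hx0 : (0:ℝ) ≤ ‖x‖ := norm_nonneg x
    by_cases hc : 2*A ≤ ‖x‖
    · have mvt : |G t x - G t (x - α)| ≤
          M₁ * 2^(d+2) / ((t + ‖x‖) ^ d * (1 + t + ‖x‖) ^ 2) * ‖α‖ :=
        aux_mvt (G t) (hdiff t ht) t M₁ ht hM₁ d (fun y => hG' t y ht) x α hc
      have hgval : g₁ ‖x‖ = ‖x‖^b₀ / ((t+‖x‖)^d * (1+t+‖x‖)^2) := by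
        simp only [hg₁def]
        rw [Set.indicator_of_mem (mem_Ici.mpr hc)]
      have hφ1 : 0 ≤ w * φ ‖x‖ := mul_nonneg hwnn (hφnn _)
      have hφ2 : 0 ≤ w * φ ‖x - α‖ := mul_nonneg hwnn (hφnn _)
      calc ‖x‖^b₀ * |G t x - G t (x - α)|
          ≤ ‖x‖^b₀ * (M₁ * 2^(d+2) / ((t + ‖x‖) ^ d * (1 + t + ‖x‖) ^ 2) * ‖α‖) :=
            mul_le_mul_of_nonneg_left mvt (Real.rpow_nonneg hx0 b₀)
        _ = c₁ * g₁ ‖x‖ := by rw [hgval, hc₁def, hAdef]; ring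
        _ ≤ h x := by simp only [hhdef]; linarith
    · push_neg at hc
      have hδ : |G t x - G t (x - α)| ≤ |G t x| + |G t (x - α)| := by
        have := abs_add_le (G t x) (-(G t (x - α)))
        simpa [sub_eq_add_neg] using this
      have hb1 : ‖x‖^b₀ ≤ (2*A)^b₀ := Real.rpow_le_rpow hx0 hc.le hb₀.le
      have hφx : φ ‖x‖ = ((t+‖x‖)^(d-1) * (1+t+‖x‖)^2)⁻¹ := by
        simp only [hφdef]
        exact Set.indicator_of_mem (mem_Ico.mpr ⟨hx0, lt_of_lt_of_le hc (by linarith)⟩) _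
      have hGx : |G t x| ≤ M₀ * φ ‖x‖ := by
        rw [hφx, ← div_eq_mul_inv]; exact hG t x ht
      have hxa : ‖x - α‖ < 3*A := by
        have h1 := norm_sub_le x α
        rw [← hAdef] at h1
        linarith
      have hφxa : φ ‖x - α‖ = ((t+‖x - α‖)^(d-1) * (1+t+‖x - α‖)^2)⁻¹ := by
        simp only [hφdef]
        exact Set.indicator_of_mem (mem_Ico.mpr ⟨norm_nonneg _, hxa⟩) _
      have hGxa : |G t (x - α)| ≤ M₀ * φ ‖x - α‖ := by
        rw [hφxa, ← div_eq_mul_inv]; exact hG t (x - α) ht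
      have hφsum : 0 ≤ φ ‖x‖ + φ ‖x - α‖ := add_nonneg (hφnn _) (hφnn _)
      calc ‖x‖^b₀ * |G t x - G t (x - α)|
          ≤ (2*A)^b₀ * (|G t x| + |G t (x - α)|) :=
            mul_le_mul hb1 hδ (abs_nonneg _) (by positivity)
        _ ≤ (2*A)^b₀ * (M₀ * φ ‖x‖ + M₀ * φ ‖x - α‖) :=
            mul_le_mul_of_nonneg_left (add_le_add hGx hGxa) (by positivity)
        _ = w * φ ‖x‖ + w * φ ‖x - α‖ := by rw [hwdef]; ring
        _ ≤ h x := by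
            simp only [hhdef]
            have : 0 ≤ c₁ * g₁ ‖x‖ := mul_nonneg hc₁nn (hg₁nn _)
            linarith
  have step1 : (∫ x : EuclideanSpace ℝ (Fin d), ‖x‖ ^ b₀ * |G t x - G t (x - α)|)
      ≤ ∫ x, h x :=
    integral_mono_of_nonneg (ae_of_all _ fun x => by positivity) hinth (ae_of_all _ hpt)
  -- splitting and radial reduction
  have hsplit : (∫ x, h x) = c₁ * (∫ x : EuclideanSpace ℝ (Fin d), g₁ ‖x‖)
      + 2 * (w * ∫ x : EuclideanSpace ℝ (Fin d), φ ‖x‖) := by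
    have e1 : (∫ x, h x) = (∫ x : EuclideanSpace ℝ (Fin d), (c₁ * g₁ ‖x‖ + w * φ ‖x‖))
        + ∫ x : EuclideanSpace ℝ (Fin d), w * φ ‖x - α‖ :=
      integral_add ((hint1.const_mul c₁).add (hint2.const_mul w)) (hint3.const_mul w)
    have e2 : (∫ x : EuclideanSpace ℝ (Fin d), (c₁ * g₁ ‖x‖ + w * φ ‖x‖))
        = (∫ x : EuclideanSpace ℝ (Fin d), c₁ * g₁ ‖x‖)
          + ∫ x : EuclideanSpace ℝ (Fin d), w * φ ‖x‖ :=
      integral_add (hint1.const_mul c₁) (hint2.const_mul w)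
    rw [e1, e2, integral_const_mul, integral_const_mul, integral_const_mul,
      integral_sub_right_eq_self (fun x => φ ‖x‖) α]
    ring
  have hrad1 : (∫ x : EuclideanSpace ℝ (Fin d), g₁ ‖x‖)
      = κ * ∫ r in Ioi (0:ℝ), r ^ (d-1) • g₁ r := by
    rw [integral_fun_norm_addHaar volume g₁, finrank_euclideanSpace_fin, hκdef,
      nsmul_eq_mul, smul_eq_mul]
    simp only [Measure.real]
    ring
  have hrad2 : (∫ x : EuclideanSpace ℝ (Fin d), φ ‖x‖)
      = κ * ∫ r in Ioi (0:ℝ), r ^ (d-1) • φ r := by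
    rw [integral_fun_norm_addHaar volume φ, finrank_euclideanSpace_fin, hκdef,
      nsmul_eq_mul, smul_eq_mul]
    simp only [Measure.real]
    ring
  -- 1-d bounds
  have hP₁ : (∫ r in Ioi (0:ℝ), r ^ (d-1) • g₁ r) ≤ cb * s ^ (b₀ - 2) := by
    set F₁ : ℝ → ℝ := fun r => Set.indicator (Ioc 0 s) (fun r => r^(b₀-1) * ((s^2:ℝ))⁻¹) r
      + Set.indicator (Ioi s) (fun r => r^(b₀-3)) r with hF₁def
    have i1 : Integrable (Set.indicator (Ioc 0 s) (fun r : ℝ => r^(b₀-1) * ((s^2:ℝ))⁻¹)) := by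
      rw [integrable_indicator_iff measurableSet_Ioc]
      exact (aux_ioc_rpow_int s (b₀-1) hs (by linarith)).mul_const _
    have i2 : Integrable (Set.indicator (Ioi s) (fun r : ℝ => r^(b₀-3))) := by
      rw [integrable_indicator_iff measurableSet_Ioi]
      exact integrableOn_Ioi_rpow_of_lt (by linarith) hs
    have hiF1 : IntegrableOn F₁ (Ioi 0) := (i1.add i2).integrableOn
    have hF₁nn : ∀ r : ℝ, 0 ≤ F₁ r := by
      intro r
      apply add_nonneg
      · exact Set.indicator_nonneg (fun y hy => by
          have : 0 < y := hy.1
          positivity) r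
      · exact Set.indicator_nonneg (fun y hy => by
          have : 0 < y := lt_trans hs hy
          positivity) r
    have hmono : ∀ r ∈ Ioi (0:ℝ), r ^ (d-1) • g₁ r ≤ F₁ r := by
      intro r hr
      have hr0 : (0:ℝ) < r := hr
      simp only [smul_eq_mul, hg₁def]
      by_cases hmem : 2*A ≤ r
      · rw [Set.indicator_of_mem (mem_Ici.mpr hmem)]
        have hrA : A ≤ r := by linarith
        have e1 : r^d ≤ (t+r)^d := pow_le_pow_left₀ hr0.le (by linarith) d
        by_cases hrs : r ≤ s
        · have hF : F₁ r = r^(b₀-1) * ((s^2:ℝ))⁻¹ := by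
            rw [hF₁def]
            simp only
            rw [Set.indicator_of_mem (mem_Ioc.mpr ⟨hr0, hrs⟩),
              Set.indicator_of_notMem (fun h2 => absurd (mem_Ioi.mp h2) (not_lt.mpr hrs)),
              add_zero]
          rw [hF]
          have hkey : r^(d-1) * r^b₀ = r^(b₀-1) * r^d := by
            rw [← Real.rpow_natCast r (d-1), ← Real.rpow_natCast r d,
              ← Real.rpow_add hr0, ← Real.rpow_add hr0]
            congr 1
            rw [Nat.cast_sub hd1]
            push_cast; ring
          have e2 : s^2 ≤ (1+t+r)^2 := pow_le_pow_left₀ hs.le (by rw [hsdef]; linarith) 2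
          calc r^(d-1) * (r^b₀/((t+r)^d*(1+t+r)^2))
              = (r^(b₀-1) * r^d) / ((t+r)^d*(1+t+r)^2) := by rw [← mul_div_assoc, hkey]
            _ ≤ (r^(b₀-1) * r^d) / (r^d * s^2) := by
                apply div_le_div₀ (by positivity) le_rfl (by positivity)
                exact mul_le_mul e1 e2 (by positivity) (by positivity)
            _ = r^(b₀-1) * ((s^2:ℝ))⁻¹ := by
                have hrd : (r:ℝ)^d ≠ 0 := by positivity
                field_simp
        · push_neg at hrs
          have hF : F₁ r = r^(b₀-3) := by
            rw [hF₁def]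
            simp only
            rw [Set.indicator_of_notMem (fun h2 => absurd (mem_Ioc.mp h2).2 (not_le.mpr hrs)),
              Set.indicator_of_mem (mem_Ioi.mpr hrs), zero_add]
          rw [hF]
          have hkey : r^(d-1) * r^b₀ = r^(b₀-3) * (r^d * r^2) := by
            rw [← Real.rpow_natCast r (d-1), ← Real.rpow_natCast r d,
              ← Real.rpow_natCast r 2, ← Real.rpow_add hr0, ← Real.rpow_add hr0,
              ← Real.rpow_add hr0]
            congr 1
            rw [Nat.cast_sub hd1]
            push_cast; ring
          have e2 : r^2 ≤ (1+t+r)^2 := pow_le_pow_left₀ hr0.le (by linarith) 2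
          calc r^(d-1) * (r^b₀/((t+r)^d*(1+t+r)^2))
              = (r^(b₀-3) * (r^d * r^2)) / ((t+r)^d*(1+t+r)^2) := by
                rw [← mul_div_assoc, hkey]
            _ ≤ (r^(b₀-3) * (r^d * r^2)) / (r^d * r^2) := by
                apply div_le_div₀ (by positivity) le_rfl (by positivity)
                exact mul_le_mul e1 e2 (by positivity) (by positivity)
            _ = r^(b₀-3) := by
                field_simp
      · rw [Set.indicator_of_notMem (fun h2 => hmem (mem_Ici.mp h2)), mul_zero]
        exact hF₁nn r
    have hle : (∫ r in Ioi (0:ℝ), r ^ (d-1) • g₁ r) ≤ ∫ r in Ioi (0:ℝ), F₁ r := by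
      apply integral_mono_of_nonneg
      · filter_upwards [ae_restrict_mem measurableSet_Ioi] with r hr
        have hr0 : (0:ℝ) < r := hr
        simp only [smul_eq_mul]
        exact mul_nonneg (by positivity) (hg₁nn r)
      · exact hiF1
      · filter_upwards [ae_restrict_mem measurableSet_Ioi] with r hr
        exact hmono r hr
    refine hle.trans ?_
    have hval : (∫ r in Ioi (0:ℝ), F₁ r)
        = s^b₀/b₀ * ((s^2:ℝ))⁻¹ + s^(b₀-2)/(2-b₀) := by
      rw [hF₁def]
      rw [integral_add i1.integrableOn i2.integrableOn]
      rw [integral_indicator measurableSet_Ioc, integral_indicator measurableSet_Ioi,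
        Measure.restrict_restrict measurableSet_Ioc, Measure.restrict_restrict measurableSet_Ioi,
        inter_eq_left.mpr Ioc_subset_Ioi_self, inter_eq_left.mpr (Ioi_subset_Ioi hs.le)]
      rw [integral_mul_const, aux_ioc_rpow_val s (b₀-1) hs (by linarith),
        aux_ioi_rpow_val s (b₀-3) hs (by linarith)]
      have e1 : b₀ - 1 + 1 = b₀ := by ring
      have e2 : b₀ - 3 + 1 = b₀ - 2 := by ring
      rw [e1, e2]
      ring_nf
    rw [hval]
    have hpow : s^b₀ * ((s^2:ℝ))⁻¹ = s^(b₀-2) := by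
      rw [← Real.rpow_natCast s 2, ← Real.rpow_neg hs.le, ← Real.rpow_add hs]
      push_cast
      ring_nf
    have : s^b₀/b₀ * ((s^2:ℝ))⁻¹ = (1/b₀) * s^(b₀-2) := by
      rw [← hpow]; ring
    rw [this, hcbdef]
    have h2b : (0:ℝ) < 2 - b₀ := by linarith
    rw [div_eq_mul_inv (s^(b₀-2)) (2-b₀)]
    have : (1/b₀ + 1/(2-b₀)) * s^(b₀-2) = 1/b₀ * s^(b₀-2) + s^(b₀-2) * (2-b₀)⁻¹ := by
      field_simp
    rw [this]
  have hP₂nn : 0 ≤ ∫ r in Ioi (0:ℝ), r ^ (d-1) • φ r := by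
    apply setIntegral_nonneg measurableSet_Ioi
    intro r hr
    have := hφnn r
    have : (0:ℝ) ≤ r ^ (d-1) := pow_nonneg (le_of_lt hr) _
    simp only [smul_eq_mul]
    exact mul_nonneg this (hφnn r)
  -- RHS term nonnegativity
  have hT₁ : 0 ≤ M₁ * A / s ^ (2 - b₀) := by positivity
  have hT₂ : 0 ≤ (if t < A then (1:ℝ) else 0) * M₁ * A ^ b₀ / (1 + t) := by
    split <;> positivity
  have hT₃ : 0 ≤ (if A ≤ t then (1:ℝ) else 0) * M₁ * A ^ ((d:ℝ) + b₀)
      / (t ^ (d-1) * (1+t)^2) := by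
    split <;> positivity
  -- first term bound
  have hterm1 : c₁ * (∫ x : EuclideanSpace ℝ (Fin d), g₁ ‖x‖)
      ≤ C₁ * (M₁ * A / s ^ (2 - b₀)) := by
    rw [hrad1]
    have h1 : c₁ * (κ * ∫ r in Ioi (0:ℝ), r ^ (d-1) • g₁ r)
        ≤ c₁ * (κ * (cb * s ^ (b₀ - 2))) := by
      apply mul_le_mul_of_nonneg_left _ hc₁nn
      exact mul_le_mul_of_nonneg_left hP₁ hκ
    refine h1.trans (le_of_eq ?_)
    have hsb : s ^ (b₀ - 2) = (s ^ (2 - b₀))⁻¹ := by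
      rw [← Real.rpow_neg hs.le]
      ring_nf
    rw [hsb, hc₁def, hC₁def]
    field_simp
  rcases le_or_gt A t with hcase | hcase
  · -- A ≤ t : use third term
    have hP₂ : (∫ r in Ioi (0:ℝ), r ^ (d-1) • φ r)
        ≤ (3*A)^d / d * (t^(d-1) * (1+t)^2)⁻¹ := by
      set c := ((t^(d-1) * (1+t)^2 : ℝ))⁻¹ with hcdef
      have hcnn : 0 ≤ c := by positivity
      set F₂ : ℝ → ℝ := fun r => Set.indicator (Ioc 0 (3*A)) (fun r => r^(d-1) * c) r with hF₂def
      have i1 : Integrable (Set.indicator (Ioc 0 (3*A)) (fun r : ℝ => r^(d-1) * c)) := by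
        rw [integrable_indicator_iff measurableSet_Ioc]
        have : IntegrableOn (fun r : ℝ => r^(d-1)) (Ioc 0 (3*A)) := by
          have := (intervalIntegral.intervalIntegrable_pow (d-1) (a := 0) (b := 3*A) (μ := volume))
          rwa [intervalIntegrable_iff_integrableOn_Ioc_of_le (by positivity)] at this
        exact this.mul_const _
      have hF₂nn : ∀ r : ℝ, 0 ≤ F₂ r := fun r =>
        Set.indicator_nonneg (fun y hy => by
          have : 0 < y := hy.1
          positivity) r
      have hmono : ∀ r ∈ Ioi (0:ℝ), r ^ (d-1) • φ r ≤ F₂ r := by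
        intro r hr
        have hr0 : (0:ℝ) < r := hr
        simp only [smul_eq_mul, hφdef]
        by_cases hlt : r < 3*A
        · rw [Set.indicator_of_mem (mem_Ico.mpr ⟨hr0.le, hlt⟩)]
          have hF : F₂ r = r^(d-1) * c := by
            rw [hF₂def]
            simp only
            rw [Set.indicator_of_mem (mem_Ioc.mpr ⟨hr0, hlt.le⟩)]
          rw [hF]
          apply mul_le_mul_of_nonneg_left _ (by positivity)
          rw [hcdef]
          apply inv_anti₀ (by positivity)
          exact mul_le_mul (pow_le_pow_left₀ ht.le (by linarith) _)
            (pow_le_pow_left₀ (by positivity) (by linarith) 2) (by positivity) (by positivity)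
        · rw [Set.indicator_of_notMem (fun h2 => hlt (mem_Ico.mp h2).2), mul_zero]
          exact hF₂nn r
      have hle : (∫ r in Ioi (0:ℝ), r ^ (d-1) • φ r) ≤ ∫ r in Ioi (0:ℝ), F₂ r := by
        apply integral_mono_of_nonneg
        · filter_upwards [ae_restrict_mem measurableSet_Ioi] with r hr
          have hr0 : (0:ℝ) < r := hr
          simp only [smul_eq_mul]
          exact mul_nonneg (by positivity) (hφnn r)
        · exact i1.integrableOn
        · filter_upwards [ae_restrict_mem measurableSet_Ioi] with r hr
          exact hmono r hr
      refine hle.trans (le_of_eq ?_)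
      rw [hF₂def]
      simp only
      rw [integral_indicator measurableSet_Ioc,
        Measure.restrict_restrict measurableSet_Ioc,
        inter_eq_left.mpr Ioc_subset_Ioi_self, integral_mul_const]
      have hpint : (∫ r in Ioc (0:ℝ) (3*A), r^(d-1)) = (3*A)^d / d := by
        rw [← _root_.intervalIntegral.integral_of_le (by positivity : (0:ℝ) ≤ 3*A),
          integral_pow]
        have ed : d - 1 + 1 = d := Nat.sub_add_cancel hd1
        rw [ed, Nat.cast_sub hd1, zero_pow (by omega)]
        push_cast
        ring
      rw [hpint]
    have hterm3 : 2 * (w * ∫ x : EuclideanSpace ℝ (Fin d), φ ‖x‖)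
        ≤ C₃ * (M₁ * A ^ ((d:ℝ) + b₀) / (t ^ (d-1) * (1+t)^2)) := by
      rw [hrad2]
      have h1 : 2 * (w * (κ * ∫ r in Ioi (0:ℝ), r ^ (d-1) • φ r))
          ≤ 2 * (w * (κ * ((3*A)^d / d * (t^(d-1) * (1+t)^2)⁻¹))) := by
        apply mul_le_mul_of_nonneg_left _ (by norm_num)
        apply mul_le_mul_of_nonneg_left _ hwnn
        exact mul_le_mul_of_nonneg_left hP₂ hκ
      refine h1.trans ?_
      have hA2 : (2*A) ^ b₀ = 2^b₀ * A^b₀ := Real.mul_rpow (by norm_num) hA.le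
      have h3A : ((3*A):ℝ)^d = 3^d * A^d := mul_pow 3 A d
      have hAdb : A ^ ((d:ℝ) + b₀) = A^d * A^b₀ := by
        rw [Real.rpow_add hA, Real.rpow_natCast]
      have heq : 2 * (w * (κ * ((3*A)^d / d * (t^(d-1) * (1+t)^2)⁻¹)))
          = C₃ * (M₀ * A ^ ((d:ℝ) + b₀) / (t ^ (d-1) * (1+t)^2)) := by
        rw [hwdef, hC₃def, hA2, h3A, hAdb]
        have hdne : (d:ℝ) ≠ 0 := by positivity
        field_simp
      rw [heq]
      gcongr
    have hg : (if t < A then (1:ℝ) else 0) = 0 := by simp [not_lt.2 hcase]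
    have hg' : (if A ≤ t then (1:ℝ) else 0) = 1 := by simp [hcase]
    rw [hg, hg']
    calc (∫ x : EuclideanSpace ℝ (Fin d), ‖x‖ ^ b₀ * |G t x - G t (x - α)|)
        ≤ ∫ x, h x := step1
      _ = c₁ * (∫ x : EuclideanSpace ℝ (Fin d), g₁ ‖x‖)
          + 2 * (w * ∫ x : EuclideanSpace ℝ (Fin d), φ ‖x‖) := hsplit
      _ ≤ C₁ * (M₁ * A / s ^ (2 - b₀))
          + C₃ * (M₁ * A ^ ((d:ℝ) + b₀) / (t ^ (d-1) * (1+t)^2)) := by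
          exact add_le_add hterm1 hterm3
      _ ≤ (C₁ + C₂ + C₃ + 1) * (M₁ * A / s ^ (2 - b₀)
          + 0 * M₁ * A ^ b₀ / (1 + t)
          + 1 * M₁ * A ^ ((d:ℝ) + b₀) / (t ^ (d-1) * (1+t)^2)) := by
          have h1 : 0 ≤ M₁ * A / s ^ (2-b₀) := hT₁
          have h2 : 0 ≤ M₁ * A ^ ((d:ℝ) + b₀) / (t ^ (d-1) * (1+t)^2) := by positivity
          have e1 : C₁ * (M₁ * A / s ^ (2 - b₀)) ≤ (C₁ + C₂ + C₃ + 1) * (M₁ * A / s ^ (2 - b₀)) :=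
            mul_le_mul_of_nonneg_right (by linarith) h1
          have e2 : C₃ * (M₁ * A ^ ((d:ℝ) + b₀) / (t ^ (d-1) * (1+t)^2))
              ≤ (C₁ + C₂ + C₃ + 1) * (M₁ * A ^ ((d:ℝ) + b₀) / (t ^ (d-1) * (1+t)^2)) :=
            mul_le_mul_of_nonneg_right (by linarith) h2
          calc C₁ * (M₁ * A / s ^ (2 - b₀)) + C₃ * (M₁ * A ^ ((d:ℝ) + b₀) / (t ^ (d-1) * (1+t)^2))
              ≤ (C₁ + C₂ + C₃ + 1) * (M₁ * A / s ^ (2 - b₀))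
                + (C₁ + C₂ + C₃ + 1) * (M₁ * A ^ ((d:ℝ) + b₀) / (t ^ (d-1) * (1+t)^2)) :=
              add_le_add e1 e2
            _ = _ := by ring
  · -- t < A : use second term
    have hP₂ : (∫ r in Ioi (0:ℝ), r ^ (d-1) • φ r) ≤ 2 * (1+t)⁻¹ := by
      have h1t : (0:ℝ) < 1 + t := by linarith
      set F₂ : ℝ → ℝ := fun r => Set.indicator (Ioc 0 (1+t)) (fun _ => (((1+t)^2:ℝ))⁻¹) r
        + Set.indicator (Ioi (1+t)) (fun r => r^(-2:ℝ)) r with hF₂def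
      have i1 : Integrable (Set.indicator (Ioc 0 (1+t)) (fun _ : ℝ => (((1+t)^2:ℝ))⁻¹)) := by
        rw [integrable_indicator_iff measurableSet_Ioc]
        apply (integrableOn_const_iff enorm_ne_top).mpr
        right
        rw [Real.volume_Ioc]
        exact ENNReal.ofReal_lt_top
      have i2 : Integrable (Set.indicator (Ioi (1+t)) (fun r : ℝ => r^(-2:ℝ))) := by
        rw [integrable_indicator_iff measurableSet_Ioi]
        exact integrableOn_Ioi_rpow_of_lt (by norm_num) h1t
      have hF₂nn : ∀ r : ℝ, 0 ≤ F₂ r := by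
        intro r
        apply add_nonneg
        · exact Set.indicator_nonneg (fun y _ => by positivity) r
        · exact Set.indicator_nonneg (fun y hy => by
            have : 0 < y := lt_trans h1t hy
            positivity) r
      have hmono : ∀ r ∈ Ioi (0:ℝ), r ^ (d-1) • φ r ≤ F₂ r := by
        intro r hr
        have hr0 : (0:ℝ) < r := hr
        simp only [smul_eq_mul]
        have hφle : φ r ≤ ((t+r)^(d-1) * (1+t+r)^2)⁻¹ := by
          simp only [hφdef]
          by_cases hmem : r ∈ Ico 0 (3*A)
          · rw [Set.indicator_of_mem hmem]
          · rw [Set.indicator_of_notMem hmem]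
            positivity
        have hkey : r ^ (d-1) * φ r ≤ ((1+t+r)^2)⁻¹ := by
          have h2 : r ^ (d-1) * φ r ≤ r ^ (d-1) * ((t+r)^(d-1) * (1+t+r)^2)⁻¹ :=
            mul_le_mul_of_nonneg_left hφle (by positivity)
          refine h2.trans ?_
          rw [mul_inv, ← mul_assoc, ← div_eq_mul_inv]
          apply mul_le_of_le_one_left (by positivity)
          exact div_le_one_of_le₀ (pow_le_pow_left₀ hr0.le (by linarith) _) (by positivity)
        by_cases hrs : r ≤ 1 + t
        · have hF : F₂ r = (((1+t)^2:ℝ))⁻¹ := by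
            rw [hF₂def]
            simp only
            rw [Set.indicator_of_mem (mem_Ioc.mpr ⟨hr0, hrs⟩),
              Set.indicator_of_notMem (fun h2 => absurd (mem_Ioi.mp h2) (not_lt.mpr hrs)),
              add_zero]
          rw [hF]
          refine hkey.trans ?_
          apply inv_anti₀ (by positivity)
          exact pow_le_pow_left₀ (by positivity) (by linarith) 2
        · push_neg at hrs
          have hF : F₂ r = r^(-2:ℝ) := by
            rw [hF₂def]
            simp only
            rw [Set.indicator_of_notMem (fun h2 => absurd (mem_Ioc.mp h2).2 (not_le.mpr hrs)),
              Set.indicator_of_mem (mem_Ioi.mpr hrs), zero_add]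
          rw [hF]
          refine hkey.trans ?_
          have : r^(-2:ℝ) = ((r^2:ℝ))⁻¹ := by
            rw [← Real.rpow_natCast r 2, ← Real.rpow_neg hr0.le]
            norm_num
          rw [this]
          apply inv_anti₀ (by positivity)
          exact pow_le_pow_left₀ hr0.le (by linarith) 2
      have hle : (∫ r in Ioi (0:ℝ), r ^ (d-1) • φ r) ≤ ∫ r in Ioi (0:ℝ), F₂ r := by
        apply integral_mono_of_nonneg
        · filter_upwards [ae_restrict_mem measurableSet_Ioi] with r hr
          have hr0 : (0:ℝ) < r := hr
          simp only [smul_eq_mul]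
          exact mul_nonneg (by positivity) (hφnn r)
        · exact (i1.add i2).integrableOn
        · filter_upwards [ae_restrict_mem measurableSet_Ioi] with r hr
          exact hmono r hr
      refine hle.trans (le_of_eq ?_)
      rw [hF₂def]
      rw [integral_add i1.integrableOn i2.integrableOn]
      rw [integral_indicator measurableSet_Ioc, integral_indicator measurableSet_Ioi,
        Measure.restrict_restrict measurableSet_Ioc, Measure.restrict_restrict measurableSet_Ioi,
        inter_eq_left.mpr Ioc_subset_Ioi_self, inter_eq_left.mpr (Ioi_subset_Ioi h1t.le)]
      rw [setIntegral_const, aux_ioi_rpow_val (1+t) (-2) h1t (by norm_num)]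
      rw [measureReal_def, Real.volume_Ioc]
      have e1 : (-2:ℝ) + 1 = -1 := by norm_num
      rw [e1, Real.rpow_neg_one, ENNReal.toReal_ofReal (by linarith), smul_eq_mul]
      field_simp
      ring
    have hterm2 : 2 * (w * ∫ x : EuclideanSpace ℝ (Fin d), φ ‖x‖)
        ≤ C₂ * (M₁ * A ^ b₀ / (1 + t)) := by
      rw [hrad2]
      have h1 : 2 * (w * (κ * ∫ r in Ioi (0:ℝ), r ^ (d-1) • φ r))
          ≤ 2 * (w * (κ * (2 * (1+t)⁻¹))) := by
        apply mul_le_mul_of_nonneg_left _ (by norm_num)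
        apply mul_le_mul_of_nonneg_left _ hwnn
        exact mul_le_mul_of_nonneg_left hP₂ hκ
      refine h1.trans ?_
      have hA2 : (2*A) ^ b₀ = 2^b₀ * A^b₀ := Real.mul_rpow (by norm_num) hA.le
      have h1t : (0:ℝ) < 1 + t := by linarith
      have heq : 2 * (w * (κ * (2 * (1+t)⁻¹))) = C₂ * (M₀ * A ^ b₀ / (1 + t)) := by
        rw [hwdef, hC₂def, hA2]
        field_simp
        ring
      rw [heq]
      gcongr
    have hg : (if t < A then (1:ℝ) else 0) = 1 := by simp [hcase]
    have hg' : (if A ≤ t then (1:ℝ) else 0) = 0 := by simp [not_le.2 hcase]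
    rw [hg, hg']
    calc (∫ x : EuclideanSpace ℝ (Fin d), ‖x‖ ^ b₀ * |G t x - G t (x - α)|)
        ≤ ∫ x, h x := step1
      _ = c₁ * (∫ x : EuclideanSpace ℝ (Fin d), g₁ ‖x‖)
          + 2 * (w * ∫ x : EuclideanSpace ℝ (Fin d), φ ‖x‖) := hsplit
      _ ≤ C₁ * (M₁ * A / s ^ (2 - b₀)) + C₂ * (M₁ * A ^ b₀ / (1 + t)) := by
          exact add_le_add hterm1 hterm2
      _ ≤ (C₁ + C₂ + C₃ + 1) * (M₁ * A / s ^ (2 - b₀)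
          + 1 * M₁ * A ^ b₀ / (1 + t)
          + 0 * M₁ * A ^ ((d:ℝ) + b₀) / (t ^ (d-1) * (1+t)^2)) := by
          have h1 : 0 ≤ M₁ * A / s ^ (2-b₀) := hT₁
          have h2 : 0 ≤ M₁ * A ^ b₀ / (1 + t) := by positivity
          have e1 : C₁ * (M₁ * A / s ^ (2 - b₀)) ≤ (C₁ + C₂ + C₃ + 1) * (M₁ * A / s ^ (2 - b₀)) :=
            mul_le_mul_of_nonneg_right (by linarith) h1
          have e2 : C₂ * (M₁ * A ^ b₀ / (1 + t))
              ≤ (C₁ + C₂ + C₃ + 1) * (M₁ * A ^ b₀ / (1 + t)) :=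
            mul_le_mul_of_nonneg_right (by linarith) h2
          calc C₁ * (M₁ * A / s ^ (2 - b₀)) + C₂ * (M₁ * A ^ b₀ / (1 + t))
              ≤ (C₁ + C₂ + C₃ + 1) * (M₁ * A / s ^ (2 - b₀))
                + (C₁ + C₂ + C₃ + 1) * (M₁ * A ^ b₀ / (1 + t)) :=
              add_le_add e1 e2
            _ = _ := by ring
end

section
/- (Polynomial chain-rule remainder estimate.) Let H₀ : ℝ^d → ℝ be C^{|γ|} and A₀ : ℝ^d → ℝ^d be C^{|γ|}, λ ∈ ℝ, and let γ be a nonzero multi-index. Then at every point x, |∂_x^γ [H₀(λx + A₀(x))] − (∂_x^γ H₀)(λx+A₀(x)) λ^{|γ|}| ≤ C(d,γ) [ |(∇^{|γ|}H₀)(λx+A₀(x))| |∇A₀(x)| (|λ| + |∇A₀(x)|)^{|γ|−1} + Σ_{k=1}^{|γ|−1} Σ_{j=0}^{k−1} Σ_{i=2}^{|γ|−j} |(∇^k H₀)(λx+A₀(x))| (|λ|+|∇A₀(x)|)^j |∇^i A₀(x)|^{(|γ|−j)/i} ]. -/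
open MeasureTheory

section Aux

open Function Set

namespace OrderedFinpartition

variable {n : ℕ}

lemma sum_partSize' (c : OrderedFinpartition n) : ∑ m, c.partSize m = n := by
  classical
  simpa [Fintype.card_sigma] using (Fintype.card_congr c.equivSigma)

lemma eq_atomic_of_partSize' (c : OrderedFinpartition n) (h : ∀ m, c.partSize m = 1) :
    c = OrderedFinpartition.atomic n := by
  have hsum := c.sum_partSize'
  obtain ⟨ℓ, partSize, pos, emb, hsm, hpm, hdisj, hcov⟩ := c
  simp only at h hsum ⊢
  have hlen : ℓ = n := by simpa [h] using hsum
  subst hlen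
  obtain rfl : partSize = fun _ => 1 := funext h
  have hmono : StrictMono (fun m => emb m ⟨0, Nat.zero_lt_one⟩) := by
    convert hpm using 2
    rfl
  have hrange : Set.range (fun m => emb m ⟨0, Nat.zero_lt_one⟩)
      = Set.range (id : Fin ℓ → Fin ℓ) := by
    rw [Set.range_id]
    exact Set.range_eq_univ.2 (Finite.surjective_of_injective hmono.injective)
  have hid := (StrictMono.range_inj hmono strictMono_id).1 hrange
  obtain rfl : emb = fun m _ => m := by
    funext m j
    have hj : j = ⟨0, Nat.zero_lt_one⟩ := Subsingleton.elim _ _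
    rw [hj]
    exact congrFun hid m
  rfl

end OrderedFinpartition

variable {E : Type*} [NormedAddCommGroup E] [NormedSpace ℝ E]
  {F : Type*} [NormedAddCommGroup F] [NormedSpace ℝ F]
  {G : Type*} [NormedAddCommGroup G] [NormedSpace ℝ G]

lemma norm_compAlong' {n : ℕ} (c : OrderedFinpartition n)
    (f : ContinuousMultilinearMap ℝ (fun _ : Fin c.length => F) G)
    (p : ∀ i : Fin c.length, ContinuousMultilinearMap ℝ (fun _ : Fin (c.partSize i) => E) F) :
    ‖c.compAlongOrderedFinpartition f p‖ ≤ ‖f‖ * ∏ m, ‖p m‖ := by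
  apply ContinuousMultilinearMap.opNorm_le_bound (by positivity) (fun v => ?_)
  rw [c.compAlongOrderFinpartition_apply]
  calc ‖f (c.applyOrderedFinpartition p v)‖
      ≤ ‖f‖ * ∏ m, ‖p m (v ∘ c.emb m)‖ := f.le_opNorm _
    _ ≤ ‖f‖ * ∏ m, (‖p m‖ * ∏ j, ‖v (c.emb m j)‖) := by
        have := Finset.prod_le_prod (s := (Finset.univ : Finset (Fin c.length)))
          (fun m _ => norm_nonneg (p m ((fun j => v j) ∘ c.emb m)))
          (fun m _ => (p m).le_opNorm ((fun j => v j) ∘ c.emb m))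
        exact mul_le_mul_of_nonneg_left this (norm_nonneg f)
    _ = (‖f‖ * ∏ m, ‖p m‖) * ∏ i, ‖v i‖ := by
        rw [Finset.prod_mul_distrib, c.prod_sigma_eq_prod (fun j => ‖v j‖), mul_assoc]

lemma atomic_comp_apply' {n : ℕ} (q : FormalMultilinearSeries ℝ E ℝ)
    (p : FormalMultilinearSeries ℝ E E) (v : Fin n → E) :
    q.compAlongOrderedFinpartition p (OrderedFinpartition.atomic n) v
      = q n (fun m => p 1 (fun _ => v m)) := rfl

lemma fderiv_g_eq' {A₀ : E → E} {lam : ℝ} (hA : Differentiable ℝ A₀) (x : E) :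
    fderiv ℝ (fun y => lam • y + A₀ y) x
      = lam • ContinuousLinearMap.id ℝ E + fderiv ℝ A₀ x :=
  (((hasFDerivAt_id x).const_smul lam).add (hA x).hasFDerivAt).fderiv

lemma iteratedFDeriv_g_eq' {A₀ : E → E} {lam : ℝ} {i : ℕ} (hi : 2 ≤ i)
    (hA : ContDiff ℝ i A₀) (x : E) :
    iteratedFDeriv ℝ i (fun y => lam • y + A₀ y) x = iteratedFDeriv ℝ i A₀ x := by
  have h1 : iteratedFDeriv ℝ i ((fun y : E => lam • y) + A₀) x
      = iteratedFDeriv ℝ i (fun y : E => lam • y) x + iteratedFDeriv ℝ i A₀ x :=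
    iteratedFDeriv_add_apply (contDiff_id.const_smul lam).contDiffAt hA.contDiffAt
  have h2 : iteratedFDeriv ℝ i (fun y : E => lam • y) x = 0 := by
    obtain ⟨j, rfl⟩ : ∃ j, i = j + 1 + 1 := ⟨i - 2, by omega⟩
    ext m
    rw [iteratedFDeriv_succ_apply_right]
    have hf : (fderiv ℝ fun y : E => lam • y) =
        fun _ => lam • ContinuousLinearMap.id ℝ E :=
      funext fun y => ((hasFDerivAt_id y).const_smul lam).fderiv
    rw [hf, iteratedFDeriv_const_of_ne (by omega)]
    simp
  have : (fun y : E => lam • y + A₀ y) = ((fun y : E => lam • y) + A₀) := rfl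
  rw [this, h1, h2, zero_add]

lemma taylorComp_eq' {n : ℕ} {H₀ : E → ℝ} {A₀ : E → E} {lam : ℝ}
    (hH : ContDiff ℝ n H₀) (hA : ContDiff ℝ n A₀) (x : E) :
    iteratedFDeriv ℝ n (fun y => H₀ (lam • y + A₀ y)) x =
      ∑ c : OrderedFinpartition n,
        (ftaylorSeries ℝ H₀ (lam • x + A₀ x)).compAlongOrderedFinpartition
          (ftaylorSeries ℝ (fun y => lam • y + A₀ y) x) c := by
  have hg : ContDiff ℝ n (fun y : E => lam • y + A₀ y) :=
    (contDiff_id.const_smul lam).add hA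
  have hH' : HasFTaylorSeriesUpTo (n : ℕ∞) H₀ (ftaylorSeries ℝ H₀) :=
    contDiff_iff_ftaylorSeries.1 (by exact_mod_cast hH)
  have hg' : HasFTaylorSeriesUpTo (n : ℕ∞) (fun y : E => lam • y + A₀ y)
      (ftaylorSeries ℝ (fun y : E => lam • y + A₀ y)) :=
    contDiff_iff_ftaylorSeries.1 (by exact_mod_cast hg)
  have hcomp :
      HasFTaylorSeriesUpTo ((n : ℕ∞) : WithTop ℕ∞)
        (H₀ ∘ fun y : E => lam • y + A₀ y)
        (fun y => (ftaylorSeries ℝ H₀ (lam • y + A₀ y)).taylorComp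
          (ftaylorSeries ℝ (fun y : E => lam • y + A₀ y) y)) := by
    rw [← hasFTaylorSeriesUpToOn_univ_iff]
    exact ((hasFTaylorSeriesUpToOn_univ_iff.2 hH').comp
      (hasFTaylorSeriesUpToOn_univ_iff.2 hg') (Set.mapsTo_univ _ _))
  exact (hcomp.eq_iteratedFDeriv (m := n) (by exact_mod_cast le_rfl) x).symm

end Aux

set_option maxHeartbeats 2000000 in
/-- polynomial chain-rule remainder estimate (Lemma 7.1 of the paper).
The multi-index `γ` with `|γ| = n ≥ 1` is encoded by a map `w : Fin n → Fin d`
listing the coordinate directions with multiplicities (`γ i = #{j | w j = i}`), and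
`∂_x^γ f x = D^n f x (e_{w 0}, …, e_{w (n-1)})` via the iterated derivative. -/
theorem chain_rule_remainder (d n : ℕ) (hn : 1 ≤ n) (γ : Fin d → ℕ)
    (w : Fin n → Fin d)
    (hw : ∀ i : Fin d, γ i = (Finset.univ.filter fun j => w j = i).card) :
    ∃ C : ℝ, 0 < C ∧
      ∀ (H₀ : EuclideanSpace ℝ (Fin d) → ℝ)
        (A₀ : EuclideanSpace ℝ (Fin d) → EuclideanSpace ℝ (Fin d))
        (lam : ℝ) (x : EuclideanSpace ℝ (Fin d)),
        ContDiff ℝ n H₀ → ContDiff ℝ n A₀ →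
        |iteratedFDeriv ℝ n (fun y => H₀ (lam • y + A₀ y)) x
              (fun j => EuclideanSpace.single (w j) (1 : ℝ))
          - iteratedFDeriv ℝ n H₀ (lam • x + A₀ x)
              (fun j => EuclideanSpace.single (w j) (1 : ℝ)) * lam ^ n|
          ≤ C * (‖iteratedFDeriv ℝ n H₀ (lam • x + A₀ x)‖ * ‖fderiv ℝ A₀ x‖
                  * (|lam| + ‖fderiv ℝ A₀ x‖) ^ (n - 1)
              + ∑ k ∈ Finset.Ico 1 n, ∑ j ∈ Finset.range k, ∑ i ∈ Finset.Icc 2 (n - j),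
                  ‖iteratedFDeriv ℝ k H₀ (lam • x + A₀ x)‖
                    * (|lam| + ‖fderiv ℝ A₀ x‖) ^ j
                    * ‖iteratedFDeriv ℝ i A₀ x‖ ^ (((n : ℝ) - j) / i)) := by
  classical
  refine ⟨(Fintype.card (OrderedFinpartition n) : ℝ) + n + 1, by positivity, ?_⟩
  intro H₀ A₀ lam x hH hA
  set g : EuclideanSpace ℝ (Fin d) → EuclideanSpace ℝ (Fin d) :=
    fun y => lam • y + A₀ y with hg_def
  set v : Fin n → EuclideanSpace ℝ (Fin d) := fun j => EuclideanSpace.single (w j) (1 : ℝ) with hv_def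
  have hv : ∀ j, ‖v j‖ = 1 := fun j => by
    simp [hv_def, EuclideanSpace.norm_single]
  set q : FormalMultilinearSeries ℝ (EuclideanSpace ℝ (Fin d)) ℝ := ftaylorSeries ℝ H₀ (lam • x + A₀ x) with hq_def
  set p : FormalMultilinearSeries ℝ (EuclideanSpace ℝ (Fin d)) (EuclideanSpace ℝ (Fin d)) := ftaylorSeries ℝ g x with hp_def
  set M : ℝ := |lam| + ‖fderiv ℝ A₀ x‖ with hM_def
  have hM0 : 0 ≤ M := by positivity
  have hlamM : |lam| ≤ M := le_add_of_nonneg_right (norm_nonneg _)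
  have hA1 : Differentiable ℝ A₀ := hA.differentiable (by exact_mod_cast (by omega : n ≠ 0))
  have hfd : fderiv ℝ g x = lam • ContinuousLinearMap.id ℝ (EuclideanSpace ℝ (Fin d)) + fderiv ℝ A₀ x :=
    fderiv_g_eq' hA1 x
  have hDg : ‖fderiv ℝ g x‖ ≤ M := by
    rw [hfd]
    refine (norm_add_le _ _).trans ?_
    rw [hM_def]
    gcongr
    refine ContinuousLinearMap.opNorm_le_bound _ (abs_nonneg _) (fun y => ?_)
    rw [ContinuousLinearMap.smul_apply, ContinuousLinearMap.id_apply, norm_smul,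
      Real.norm_eq_abs]
  -- Faa di Bruno
  have hkey : iteratedFDeriv ℝ n (fun y => H₀ (lam • y + A₀ y)) x
      = ∑ c : OrderedFinpartition n, q.compAlongOrderedFinpartition p c :=
    taylorComp_eq' hH hA x
  -- the atomic term
  have hat : q.compAlongOrderedFinpartition p (OrderedFinpartition.atomic n) v
      = iteratedFDeriv ℝ n H₀ (lam • x + A₀ x) (fun m => fderiv ℝ g x (v m)) := by
    rw [atomic_comp_apply']
    congr 1
    funext m
    exact iteratedFDeriv_one_apply (fun _ => v m)
  have hZ : iteratedFDeriv ℝ n H₀ (lam • x + A₀ x) v * lam ^ n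
      = iteratedFDeriv ℝ n H₀ (lam • x + A₀ x) (fun m => lam • v m) := by
    have hmap := (iteratedFDeriv ℝ n H₀ (lam • x + A₀ x)).map_smul_univ (fun _ => lam) v
    rw [hmap, Finset.prod_const, Finset.card_univ, Fintype.card_fin, smul_eq_mul, mul_comm]
  have hterm1 : |q.compAlongOrderedFinpartition p (OrderedFinpartition.atomic n) v
      - iteratedFDeriv ℝ n H₀ (lam • x + A₀ x) v * lam ^ n|
      ≤ n * (‖iteratedFDeriv ℝ n H₀ (lam • x + A₀ x)‖ * ‖fderiv ℝ A₀ x‖ * M ^ (n - 1)) := by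
    rw [hat, hZ, ← Real.norm_eq_abs]
    have hb := (iteratedFDeriv ℝ n H₀ (lam • x + A₀ x)).norm_image_sub_le
      (fun m => fderiv ℝ g x (v m)) (fun m => lam • v m)
    refine hb.trans ?_
    have hm1 : ‖(fun m => fderiv ℝ g x (v m))‖ ≤ M := by
      rw [pi_norm_le_iff_of_nonneg hM0]
      intro m
      calc ‖fderiv ℝ g x (v m)‖ ≤ ‖fderiv ℝ g x‖ * ‖v m‖ :=
            (fderiv ℝ g x).le_opNorm _
        _ = ‖fderiv ℝ g x‖ := by rw [hv m, mul_one]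
        _ ≤ M := hDg
    have hm2 : ‖(fun m => lam • v m)‖ ≤ M := by
      rw [pi_norm_le_iff_of_nonneg hM0]
      intro m
      rw [norm_smul, hv m, Real.norm_eq_abs, mul_one]
      exact hlamM
    have hdiff : ‖(fun m => fderiv ℝ g x (v m)) - (fun m => lam • v m)‖
        ≤ ‖fderiv ℝ A₀ x‖ := by
      rw [pi_norm_le_iff_of_nonneg (norm_nonneg _)]
      intro m
      have heval : ((fun m => fderiv ℝ g x (v m)) - fun m => lam • v m) m
          = fderiv ℝ A₀ x (v m) := by
        simp only [Pi.sub_apply, hfd, ContinuousLinearMap.add_apply,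
          ContinuousLinearMap.smul_apply, ContinuousLinearMap.id_apply]
        abel
      rw [heval]
      calc ‖fderiv ℝ A₀ x (v m)‖ ≤ ‖fderiv ℝ A₀ x‖ * ‖v m‖ :=
            (fderiv ℝ A₀ x).le_opNorm _
        _ = ‖fderiv ℝ A₀ x‖ := by rw [hv m, mul_one]
    calc ‖iteratedFDeriv ℝ n H₀ (lam • x + A₀ x)‖ * (Fintype.card (Fin n))
          * max ‖(fun m => fderiv ℝ g x (v m))‖ ‖(fun m => lam • v m)‖ ^ (Fintype.card (Fin n) - 1)
          * ‖(fun m => fderiv ℝ g x (v m)) - (fun m => lam • v m)‖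
        ≤ ‖iteratedFDeriv ℝ n H₀ (lam • x + A₀ x)‖ * (n : ℝ) * M ^ (n - 1) * ‖fderiv ℝ A₀ x‖ := by
          simp only [Fintype.card_fin]
          gcongr
          · exact max_le hm1 hm2
      _ = n * (‖iteratedFDeriv ℝ n H₀ (lam • x + A₀ x)‖ * ‖fderiv ℝ A₀ x‖ * M ^ (n - 1)) := by
          ring
  -- bound for each non-atomic term
  have hcbound : ∀ c : OrderedFinpartition n, c ≠ OrderedFinpartition.atomic n →
      |q.compAlongOrderedFinpartition p c v|
        ≤ ∑ k ∈ Finset.Ico 1 n, ∑ j ∈ Finset.range k, ∑ i ∈ Finset.Icc 2 (n - j),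
            ‖iteratedFDeriv ℝ k H₀ (lam • x + A₀ x)‖ * M ^ j
              * ‖iteratedFDeriv ℝ i A₀ x‖ ^ (((n : ℝ) - j) / i) := by
    intro c hc
    have hps1 : ∃ m₀, c.partSize m₀ ≠ 1 := by
      by_contra hall; push_neg at hall
      exact hc (c.eq_atomic_of_partSize' hall)
    obtain ⟨m₀, hm₀⟩ := hps1
    have hm₀2 : 2 ≤ c.partSize m₀ := by have := c.partSize_pos m₀; omega
    have hsum := c.sum_partSize'
    have hk1 : 1 ≤ c.length := c.length_pos (by omega)
    have hkn : c.length < n := by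
      have h2 : ∑ _m : Fin c.length, 1 < ∑ m, c.partSize m :=
        Finset.sum_lt_sum (fun m _ => c.partSize_pos m) ⟨m₀, Finset.mem_univ _, by omega⟩
      simpa [hsum] using h2
    set s1 := Finset.univ.filter (fun m => c.partSize m = 1) with hs1
    set s2 := Finset.univ.filter (fun m => ¬ c.partSize m = 1) with hs2
    set j := s1.card with hj_def
    have hm₀s2 : m₀ ∈ s2 := by simp [hs2, hm₀]
    have hjk : j < c.length := by
      have hsub : s1 ⊆ Finset.univ.erase m₀ := by
        intro m hm
        refine Finset.mem_erase.2 ⟨?_, Finset.mem_univ _⟩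
        rintro rfl
        rw [hs1, Finset.mem_filter] at hm
        omega
      have hcard := Finset.card_le_card hsub
      rw [Finset.card_erase_of_mem (Finset.mem_univ _), Finset.card_univ,
        Fintype.card_fin] at hcard
      omega
    have hs1sum : ∑ m ∈ s1, c.partSize m = j := by
      calc ∑ m ∈ s1, c.partSize m = ∑ _m ∈ s1, 1 :=
            Finset.sum_congr rfl (fun m hm => by
              rw [hs1, Finset.mem_filter] at hm; exact hm.2)
        _ = j := by rw [Finset.sum_const, smul_eq_mul, mul_one]
    have hsplit : j + ∑ m ∈ s2, c.partSize m = n := by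
      have hfil := Finset.sum_filter_add_sum_filter_not Finset.univ
        (fun m => c.partSize m = 1) c.partSize
      rw [← hs1, ← hs2, hs1sum] at hfil
      omega
    have hs2size : ∀ m ∈ s2, 2 ≤ c.partSize m := by
      intro m hm
      rw [hs2, Finset.mem_filter] at hm
      have := c.partSize_pos m
      omega
    have hjn : j < n := lt_trans hjk hkn
    have hnj2 : 2 ≤ n - j := by
      have hle : c.partSize m₀ ≤ ∑ m ∈ s2, c.partSize m :=
        Finset.single_le_sum (fun m _ => Nat.zero_le _) hm₀s2
      omega
    have hile : ∀ m ∈ s2, c.partSize m ≤ n - j := by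
      intro m hm
      have hle : c.partSize m ≤ ∑ m ∈ s2, c.partSize m :=
        Finset.single_le_sum (fun m _ => Nat.zero_le _) hm
      omega
    have hcast : ((n : ℝ) - j) = ((n - j : ℕ) : ℝ) := by
      have hle : j ≤ n := hjn.le
      push_cast [hle]
      ring
    set S := ∑ i ∈ Finset.Icc 2 (n - j), ‖iteratedFDeriv ℝ i A₀ x‖ ^ (((n : ℝ) - j) / i)
      with hS_def
    have hS0 : 0 ≤ S :=
      Finset.sum_nonneg (fun i _ => Real.rpow_nonneg (norm_nonneg _) _)
    have hp1norm : ‖p 1‖ ≤ M := by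
      have h1 : ‖p 1‖ = ‖fderiv ℝ g x‖ := by
        show ‖iteratedFDeriv ℝ 1 g x‖ = _
        rw [← norm_iteratedFDeriv_fderiv, norm_iteratedFDeriv_zero]
      rw [h1]; exact hDg
    have hpbig : ∀ m ∈ s2, ‖p (c.partSize m)‖
        = ‖iteratedFDeriv ℝ (c.partSize m) A₀ x‖ := by
      intro m hm
      show ‖iteratedFDeriv ℝ (c.partSize m) g x‖ = _
      rw [hg_def, iteratedFDeriv_g_eq' (hs2size m hm)
        (hA.of_le (by exact_mod_cast c.partSize_le m)) x]
    have hprod2 : ∏ m ∈ s2, ‖p (c.partSize m)‖ ≤ S := by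
      rcases eq_or_lt_of_le hS0 with hS | hS
      · have hz := (Finset.sum_eq_zero_iff_of_nonneg
          (fun i _ => Real.rpow_nonneg (norm_nonneg _) _)).1 hS.symm
        have hmem : c.partSize m₀ ∈ Finset.Icc 2 (n - j) :=
          Finset.mem_Icc.2 ⟨hm₀2, hile m₀ hm₀s2⟩
        have h0 := hz _ hmem
        have hbase : ‖iteratedFDeriv ℝ (c.partSize m₀) A₀ x‖ = 0 := by
          by_contra hb
          have hbpos : 0 < ‖iteratedFDeriv ℝ (c.partSize m₀) A₀ x‖ :=
            lt_of_le_of_ne (norm_nonneg _) (Ne.symm hb)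
          exact absurd h0 (ne_of_gt (Real.rpow_pos_of_pos hbpos _))
        calc ∏ m ∈ s2, ‖p (c.partSize m)‖ = 0 :=
              Finset.prod_eq_zero hm₀s2 (by rw [hpbig m₀ hm₀s2, hbase])
          _ ≤ S := hS0
      · have hnjpos : (0 : ℝ) < (n : ℝ) - j := by
          rw [hcast]
          exact_mod_cast Nat.pos_of_ne_zero (by omega)
        have hstep : ∀ m ∈ s2, ‖p (c.partSize m)‖
            ≤ S ^ ((c.partSize m : ℝ) / ((n : ℝ) - j)) := by
          intro m hm
          rw [hpbig m hm]
          have ha0 : 0 ≤ ‖iteratedFDeriv ℝ (c.partSize m) A₀ x‖ := norm_nonneg _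
          have hmem : c.partSize m ∈ Finset.Icc 2 (n - j) :=
            Finset.mem_Icc.2 ⟨hs2size m hm, hile m hm⟩
          have h1 : ‖iteratedFDeriv ℝ (c.partSize m) A₀ x‖ ^ (((n : ℝ) - j) / (c.partSize m))
              ≤ S :=
            Finset.single_le_sum
              (f := fun i => ‖iteratedFDeriv ℝ i A₀ x‖ ^ (((n : ℝ) - j) / i))
              (fun i _ => Real.rpow_nonneg (norm_nonneg _) _) hmem
          have hipos : (0 : ℝ) < (c.partSize m : ℝ) := by
            exact_mod_cast c.partSize_pos m
          have hexp : (((n : ℝ) - j) / (c.partSize m)) * ((c.partSize m : ℝ) / ((n : ℝ) - j))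
              = 1 := by
            field_simp
          calc ‖iteratedFDeriv ℝ (c.partSize m) A₀ x‖
              = (‖iteratedFDeriv ℝ (c.partSize m) A₀ x‖ ^ (((n : ℝ) - j) / (c.partSize m)))
                  ^ ((c.partSize m : ℝ) / ((n : ℝ) - j)) := by
                rw [← Real.rpow_mul ha0, hexp, Real.rpow_one]
            _ ≤ S ^ ((c.partSize m : ℝ) / ((n : ℝ) - j)) :=
                Real.rpow_le_rpow (Real.rpow_nonneg ha0 _) h1 (by positivity)
        calc ∏ m ∈ s2, ‖p (c.partSize m)‖
            ≤ ∏ m ∈ s2, S ^ ((c.partSize m : ℝ) / ((n : ℝ) - j)) :=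
              Finset.prod_le_prod (fun m _ => norm_nonneg _) hstep
          _ = S ^ (∑ m ∈ s2, (c.partSize m : ℝ) / ((n : ℝ) - j)) :=
              (Real.rpow_sum_of_pos hS _ _).symm
          _ = S := by
              have hsum1 : ∑ m ∈ s2, ((c.partSize m : ℝ) / ((n : ℝ) - j)) = 1 := by
                rw [← Finset.sum_div]
                have hb : ∑ m ∈ s2, (c.partSize m : ℝ) = ((n : ℝ) - j) := by
                  rw [hcast, ← Nat.cast_sum]
                  congr 1
                  omega
                rw [hb]
                field_simp
              rw [hsum1, Real.rpow_one]
    have hprod1 : ∏ m ∈ s1, ‖p (c.partSize m)‖ ≤ M ^ j := by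
      calc ∏ m ∈ s1, ‖p (c.partSize m)‖ = ∏ _m ∈ s1, ‖p 1‖ :=
            Finset.prod_congr rfl (fun m hm => by
              rw [hs1, Finset.mem_filter] at hm
              rw [hm.2])
        _ = ‖p 1‖ ^ j := by rw [Finset.prod_const, hj_def]
        _ ≤ M ^ j := pow_le_pow_left₀ (norm_nonneg _) hp1norm j
    have hTc : ‖q.compAlongOrderedFinpartition p c‖
        ≤ ‖iteratedFDeriv ℝ c.length H₀ (lam • x + A₀ x)‖ * (M ^ j * S) := by
      refine (norm_compAlong' c (q c.length) (fun m => p (c.partSize m))).trans ?_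
      have hfil := Finset.prod_filter_mul_prod_filter_not Finset.univ
        (fun m => c.partSize m = 1) (fun m => ‖p (c.partSize m)‖)
      rw [← hs1, ← hs2] at hfil
      calc ‖q c.length‖ * ∏ m, ‖p (c.partSize m)‖
          = ‖q c.length‖
              * ((∏ m ∈ s1, ‖p (c.partSize m)‖) * (∏ m ∈ s2, ‖p (c.partSize m)‖)) := by
            rw [hfil]
        _ ≤ ‖q c.length‖ * (M ^ j * S) := by
            refine mul_le_mul_of_nonneg_left ?_ (norm_nonneg _)
            exact mul_le_mul hprod1 hprod2
              (Finset.prod_nonneg fun m _ => norm_nonneg _) (pow_nonneg hM0 _)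
        _ = ‖iteratedFDeriv ℝ c.length H₀ (lam • x + A₀ x)‖ * (M ^ j * S) := rfl
    have happ : |q.compAlongOrderedFinpartition p c v|
        ≤ ‖q.compAlongOrderedFinpartition p c‖ := by
      rw [← Real.norm_eq_abs]
      calc ‖q.compAlongOrderedFinpartition p c v‖
          ≤ ‖q.compAlongOrderedFinpartition p c‖ * ∏ m, ‖v m‖ :=
            (q.compAlongOrderedFinpartition p c).le_opNorm v
        _ = ‖q.compAlongOrderedFinpartition p c‖ := by
            simp [hv]
    refine (happ.trans hTc).trans ?_
    have heq : ‖iteratedFDeriv ℝ c.length H₀ (lam • x + A₀ x)‖ * (M ^ j * S)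
        = ∑ i ∈ Finset.Icc 2 (n - j),
            ‖iteratedFDeriv ℝ c.length H₀ (lam • x + A₀ x)‖ * M ^ j
              * ‖iteratedFDeriv ℝ i A₀ x‖ ^ (((n : ℝ) - j) / i) := by
      simp only [hS_def, Finset.mul_sum]
      exact Finset.sum_congr rfl (fun i _ => by ring)
    rw [heq]
    have hnn : ∀ (k' j' : ℕ), 0 ≤ ∑ i ∈ Finset.Icc 2 (n - j'),
        ‖iteratedFDeriv ℝ k' H₀ (lam • x + A₀ x)‖ * M ^ j'
          * ‖iteratedFDeriv ℝ i A₀ x‖ ^ (((n : ℝ) - j') / i) := by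
      intro k' j'
      refine Finset.sum_nonneg (fun i _ => ?_)
      exact mul_nonneg (mul_nonneg (norm_nonneg _) (pow_nonneg hM0 _))
        (Real.rpow_nonneg (norm_nonneg _) _)
    calc (∑ i ∈ Finset.Icc 2 (n - j),
            ‖iteratedFDeriv ℝ c.length H₀ (lam • x + A₀ x)‖ * M ^ j
              * ‖iteratedFDeriv ℝ i A₀ x‖ ^ (((n : ℝ) - j) / i))
        ≤ ∑ j' ∈ Finset.range c.length, ∑ i ∈ Finset.Icc 2 (n - j'),
            ‖iteratedFDeriv ℝ c.length H₀ (lam • x + A₀ x)‖ * M ^ j'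
              * ‖iteratedFDeriv ℝ i A₀ x‖ ^ (((n : ℝ) - j') / i) :=
          Finset.single_le_sum (f := fun j' => ∑ i ∈ Finset.Icc 2 (n - j'),
            ‖iteratedFDeriv ℝ c.length H₀ (lam • x + A₀ x)‖ * M ^ j'
              * ‖iteratedFDeriv ℝ i A₀ x‖ ^ (((n : ℝ) - j') / i))
            (fun j' _ => hnn c.length j') (Finset.mem_range.2 hjk)
      _ ≤ ∑ k ∈ Finset.Ico 1 n, ∑ j ∈ Finset.range k, ∑ i ∈ Finset.Icc 2 (n - j),
            ‖iteratedFDeriv ℝ k H₀ (lam • x + A₀ x)‖ * M ^ j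
              * ‖iteratedFDeriv ℝ i A₀ x‖ ^ (((n : ℝ) - j) / i) :=
          Finset.single_le_sum (f := fun k => ∑ j ∈ Finset.range k, ∑ i ∈ Finset.Icc 2 (n - j),
            ‖iteratedFDeriv ℝ k H₀ (lam • x + A₀ x)‖ * M ^ j
              * ‖iteratedFDeriv ℝ i A₀ x‖ ^ (((n : ℝ) - j) / i))
            (fun k _ => Finset.sum_nonneg (fun j' _ => hnn k j'))
            (Finset.mem_Ico.2 ⟨hk1, hkn⟩)
  -- assemble
  have hR1 : (0 : ℝ) ≤ ‖iteratedFDeriv ℝ n H₀ (lam • x + A₀ x)‖ * ‖fderiv ℝ A₀ x‖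
      * M ^ (n - 1) :=
    mul_nonneg (mul_nonneg (norm_nonneg _) (norm_nonneg _)) (pow_nonneg hM0 _)
  have hR2 : (0 : ℝ) ≤ ∑ k ∈ Finset.Ico 1 n, ∑ j ∈ Finset.range k, ∑ i ∈ Finset.Icc 2 (n - j),
      ‖iteratedFDeriv ℝ k H₀ (lam • x + A₀ x)‖ * M ^ j
        * ‖iteratedFDeriv ℝ i A₀ x‖ ^ (((n : ℝ) - j) / i) :=
    Finset.sum_nonneg fun k _ => Finset.sum_nonneg fun j _ => Finset.sum_nonneg fun i _ =>
      mul_nonneg (mul_nonneg (norm_nonneg _) (pow_nonneg hM0 _))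
        (Real.rpow_nonneg (norm_nonneg _) _)
  have happly : iteratedFDeriv ℝ n (fun y => H₀ (lam • y + A₀ y)) x v
      = q.compAlongOrderedFinpartition p (OrderedFinpartition.atomic n) v
        + ∑ c ∈ Finset.univ.erase (OrderedFinpartition.atomic n),
            q.compAlongOrderedFinpartition p c v := by
    rw [hkey, ContinuousMultilinearMap.sum_apply]
    exact (Finset.add_sum_erase _ _ (Finset.mem_univ _)).symm
  have hsum2 : |∑ c ∈ Finset.univ.erase (OrderedFinpartition.atomic n),
        q.compAlongOrderedFinpartition p c v|
      ≤ (Fintype.card (OrderedFinpartition n) : ℝ)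
        * ∑ k ∈ Finset.Ico 1 n, ∑ j ∈ Finset.range k, ∑ i ∈ Finset.Icc 2 (n - j),
            ‖iteratedFDeriv ℝ k H₀ (lam • x + A₀ x)‖ * M ^ j
              * ‖iteratedFDeriv ℝ i A₀ x‖ ^ (((n : ℝ) - j) / i) := by
    refine (Finset.abs_sum_le_sum_abs _ _).trans ?_
    have hstep := Finset.sum_le_card_nsmul (Finset.univ.erase (OrderedFinpartition.atomic n))
      (fun c => |q.compAlongOrderedFinpartition p c v|) _
      (fun c hcmem => hcbound c (Finset.ne_of_mem_erase hcmem))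
    refine hstep.trans ?_
    rw [nsmul_eq_mul]
    gcongr
    exact_mod_cast Finset.card_le_univ _
  calc |iteratedFDeriv ℝ n (fun y => H₀ (lam • y + A₀ y)) x v
        - iteratedFDeriv ℝ n H₀ (lam • x + A₀ x) v * lam ^ n|
      = |(q.compAlongOrderedFinpartition p (OrderedFinpartition.atomic n) v
            - iteratedFDeriv ℝ n H₀ (lam • x + A₀ x) v * lam ^ n)
          + ∑ c ∈ Finset.univ.erase (OrderedFinpartition.atomic n),
              q.compAlongOrderedFinpartition p c v| := by
        rw [happly]; ring_nf
    _ ≤ |q.compAlongOrderedFinpartition p (OrderedFinpartition.atomic n) v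
            - iteratedFDeriv ℝ n H₀ (lam • x + A₀ x) v * lam ^ n|
          + |∑ c ∈ Finset.univ.erase (OrderedFinpartition.atomic n),
              q.compAlongOrderedFinpartition p c v| := abs_add_le _ _
    _ ≤ n * (‖iteratedFDeriv ℝ n H₀ (lam • x + A₀ x)‖ * ‖fderiv ℝ A₀ x‖ * M ^ (n - 1))
          + (Fintype.card (OrderedFinpartition n) : ℝ)
            * ∑ k ∈ Finset.Ico 1 n, ∑ j ∈ Finset.range k, ∑ i ∈ Finset.Icc 2 (n - j),
                ‖iteratedFDeriv ℝ k H₀ (lam • x + A₀ x)‖ * M ^ j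
                  * ‖iteratedFDeriv ℝ i A₀ x‖ ^ (((n : ℝ) - j) / i) :=
        add_le_add hterm1 hsum2
    _ ≤ ((Fintype.card (OrderedFinpartition n) : ℝ) + n + 1)
          * (‖iteratedFDeriv ℝ n H₀ (lam • x + A₀ x)‖ * ‖fderiv ℝ A₀ x‖ * M ^ (n - 1)
            + ∑ k ∈ Finset.Ico 1 n, ∑ j ∈ Finset.range k, ∑ i ∈ Finset.Icc 2 (n - j),
                ‖iteratedFDeriv ℝ k H₀ (lam • x + A₀ x)‖ * M ^ j
                  * ‖iteratedFDeriv ℝ i A₀ x‖ ^ (((n : ℝ) - j) / i)) := by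
        have hN : (0 : ℝ) ≤ (Fintype.card (OrderedFinpartition n) : ℝ) := Nat.cast_nonneg _
        nlinarith [hR1, hR2, hN]
end
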